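/- arXiv:1711.04296 — 4 statements merged into one kernel-verified Lean document; each statement's English description precedes it below -/
import Mathlib

section
/- There exist a field K, a valuation ν on K[x] with trivial support, and a polynomial q ∈ K[x] such that ν = ν_q but q is not a key polynomial for ν. Concretely, if ν is the x-adic valuation on K[x] (extending a non-trivial valuation on K), then ν = ν_{x²} and q = x² is not a key polynomial for ν, since x² is reducible while key polynomials are irreducible. -/
open Polynomial

section KeyPolyDefs

variable {K : Type*} [Field K] {Γ : Type*} [AddCommGroup Γ] [LinearOrder Γ] [IsOrderedAddMonoid Γ]

/-- The value `ν f` read in `Γ` (junk value `0` when `ν f = ⊤`). -/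
noncomputable def aval (ν : AddValuation (Polynomial K) (WithTop Γ)) (f : Polynomial K) : Γ :=
  (ν f).untopD 0

/-- `ν` has trivial support: only `0` has value `⊤`. -/
def TrivialSupport (ν : AddValuation (Polynomial K) (WithTop Γ)) : Prop :=
  ∀ f : Polynomial K, ν f = ⊤ → f = 0

/-- The set of indices `r`, `1 ≤ r ≤ deg f` with `∂_r f ≠ 0`, over which `ε(f)` is computed. -/
noncomputable def epsSupport (f : Polynomial K) : Finset ℕ :=
  @Finset.filter _ (fun r => f.hasseDeriv r ≠ 0) (Classical.decPred _) (Finset.Icc 1 f.natDegree)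

/-- `ε(f) = max_{r ≥ 1} (ν f - ν ∂_r f) / r`, computed in the divisible group `Γ`. -/
noncomputable def eps [Module ℚ Γ] (ν : AddValuation (Polynomial K) (WithTop Γ))
    (f : Polynomial K) : Γ :=
  if h : (epsSupport f).Nonempty then
    (epsSupport f).sup' h fun r => ((r : ℚ)⁻¹) • (aval ν f - aval ν (f.hasseDeriv r))
  else 0

/-- `Q` is a key polynomial for `ν`: `Q` is monic and every `f` with `ε(f) ≥ ε(Q)` satisfies
`deg f ≥ deg Q`. -/
def IsKeyPoly [Module ℚ Γ] (ν : AddValuation (Polynomial K) (WithTop Γ))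
    (Q : Polynomial K) : Prop :=
  Q.Monic ∧ 0 < Q.natDegree ∧
    ∀ f : Polynomial K, 0 < f.natDegree → eps ν Q ≤ eps ν f → Q.natDegree ≤ f.natDegree

/-- The `i`-th coefficient of the `q`-expansion of a polynomial. -/
noncomputable def qCoeff (q : Polynomial K) : ℕ → Polynomial K → Polynomial K
  | 0, p => p % q
  | n + 1, p => qCoeff q n (p / q)

/-- The `q`-truncation `ν_q` of `ν`:  `ν_q(p) = min_i ν(p_i q^i)` where `p = Σ p_i q^i`
is the `q`-expansion of `p`. -/
noncomputable def trunc (ν : AddValuation (Polynomial K) (WithTop Γ)) (q p : Polynomial K) :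
    WithTop Γ :=
  (Finset.range (p.natDegree + 1)).inf fun i => ν (qCoeff q i p * q ^ i)

variable {L : Type*} [Field L] [Algebra K L]

/-- `δ(f)`: the maximal value `μ(x - a)` over the roots `a` of `f` in `L`
(junk value `0` if `f` has no roots in `L`). -/
noncomputable def delta (μ : AddValuation (Polynomial L) (WithTop Γ)) (f : Polynomial K) : Γ :=
  letI := Classical.decEq L
  if h : ((f.map (algebraMap K L)).roots.toFinset).Nonempty then
    ((f.map (algebraMap K L)).roots.toFinset).sup' h fun a => aval μ (X - C a)
  else 0

/-- `μ` on `L[x]` extends `ν` on `K[x]`. -/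
def IsExtension (μ : AddValuation (Polynomial L) (WithTop Γ))
    (ν : AddValuation (Polynomial K) (WithTop Γ)) : Prop :=
  ∀ f : Polynomial K, μ (f.map (algebraMap K L)) = ν f

/-- `w` on `K(x)` extends `ν` on `K[x]`. -/
def ExtendsToRatFunc (w : AddValuation (RatFunc K) (WithTop Γ))
    (ν : AddValuation (Polynomial K) (WithTop Γ)) : Prop :=
  ∀ p : Polynomial K, w (algebraMap (Polynomial K) (RatFunc K) p) = ν p

/-- The residue of `f` is transcendental over the residue field `Kν`:  every polynomial with
coefficients in the valuation ring of `K`, at least one of which is a unit, keeps value `0`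
when evaluated at `f`. -/
def ResidueTranscendentalElem (w : AddValuation (RatFunc K) (WithTop Γ)) (f : RatFunc K) : Prop :=
  ∀ (n : ℕ) (c : ℕ → K),
    (∀ i ≤ n, 0 ≤ w (algebraMap K (RatFunc K) (c i))) →
    (∃ i ≤ n, w (algebraMap K (RatFunc K) (c i)) = 0) →
    w (∑ i ∈ Finset.range (n + 1), algebraMap K (RatFunc K) (c i) * f ^ i) = 0

/-- The residue of `g` is algebraic over the residue field `Kν`: some polynomial with
coefficients in the valuation ring of `K`, at least one of which is a unit, gets positive
value when evaluated at `g`. -/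
def ResidueAlgebraicElem (w : AddValuation (RatFunc K) (WithTop Γ)) (g : RatFunc K) : Prop :=
  ∃ (n : ℕ) (c : ℕ → K),
    (∀ i ≤ n, 0 ≤ w (algebraMap K (RatFunc K) (c i))) ∧
    (∃ i ≤ n, w (algebraMap K (RatFunc K) (c i)) = 0) ∧
    0 < w (∑ i ∈ Finset.range (n + 1), algebraMap K (RatFunc K) (c i) * g ^ i)

/-- `w` is residue-transcendental: some `f` with `w f = 0` has transcendental residue. -/
def IsResidueTranscendental (w : AddValuation (RatFunc K) (WithTop Γ)) : Prop :=
  ∃ f : RatFunc K, w f = 0 ∧ ResidueTranscendentalElem w f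

/-- `w` is value-transcendental: some value `w f` is torsion-free over the value group
`νK` of `K`, i.e. `n ν(f) ∉ νK` for every `n ≥ 1`. -/
def IsValueTranscendental (w : AddValuation (RatFunc K) (WithTop Γ)) : Prop :=
  ∃ f : RatFunc K, f ≠ 0 ∧
    ∀ n : ℕ, 0 < n → ∀ c : K, c ≠ 0 → w (f ^ n) ≠ w (algebraMap K (RatFunc K) c)

/-- `w` is valuation-transcendental: it is value-transcendental or residue-transcendental. -/
def IsValuationTranscendental (w : AddValuation (RatFunc K) (WithTop Γ)) : Prop :=
  IsValueTranscendental w ∨ IsResidueTranscendental w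

end KeyPolyDefs

section MinimalPairDefs

variable {Γ : Type*} [AddCommGroup Γ] [LinearOrder Γ] [IsOrderedAddMonoid Γ] {L : Type*} [Field L]

/-- `(a, d)` is a minimal pair for the valuation (w.r.t. the extension `μ` to `L[x]`):
every `b` with `μ(b - a) ≥ d` satisfies `[K(b) : K] ≥ [K(a) : K]`. -/
def IsMinimalPair (K : Type*) [Field K] [Algebra K L]
    (μ : AddValuation (Polynomial L) (WithTop Γ)) (a : L) (d : Γ) : Prop :=
  ∀ b : L, (d : WithTop Γ) ≤ μ (C (b - a)) →
    (minpoly K a).natDegree ≤ (minpoly K b).natDegree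

/-- `(a, d)` is a minimal pair of definition: a minimal pair with `μ(x - a) = d ≥ μ(x - b)`
for every `b ∈ L`. -/
def IsMinimalPairOfDefinition (K : Type*) [Field K] [Algebra K L]
    (μ : AddValuation (Polynomial L) (WithTop Γ)) (a : L) (d : Γ) : Prop :=
  IsMinimalPair K μ a d ∧ μ (X - C a) = (d : WithTop Γ) ∧
    ∀ b : L, μ (X - C b) ≤ (d : WithTop Γ)

end MinimalPairDefs

section AuxLemmas

variable {K : Type*} [Field K] {Γ : Type*} [AddCommGroup Γ] [LinearOrder Γ] [IsOrderedAddMonoid Γ]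

lemma qCoeff_X_eq (j : ℕ) : ∀ p : Polynomial K, qCoeff X j p = C (p.coeff j) := by
  induction j with
  | zero =>
    intro p
    show p % X = _
    rw [← Polynomial.modByMonic_eq_mod p monic_X, Polynomial.modByMonic_X,
      ← coeff_zero_eq_eval_zero]
  | succ j ih =>
    intro p
    show qCoeff X j (p / X) = _
    rw [ih]
    congr 1
    rw [← Polynomial.divByMonic_eq_div p monic_X]
    have h := Polynomial.modByMonic_add_div p (X : Polynomial K)
    have := congrArg (fun r => Polynomial.coeff r (j + 1)) h
    simpa [Polynomial.modByMonic_X, Polynomial.coeff_X_mul, Polynomial.coeff_C] using this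

lemma qCoeff_expansion {q : Polynomial K} (hq : q.Monic) (hd : 0 < q.natDegree) :
    ∀ (n : ℕ) (p : Polynomial K), p.natDegree < q.natDegree * (n + 1) →
      p = ∑ i ∈ Finset.range (n + 1), qCoeff q i p * q ^ i := by
  intro n
  induction n with
  | zero =>
    intro p hp
    rw [Finset.sum_range_one]
    show p = p % q * 1
    rw [mul_one, ← Polynomial.modByMonic_eq_mod p hq,
      (Polynomial.modByMonic_eq_self_iff hq).2 (Polynomial.degree_lt_degree (by omega))]
  | succ n ih =>
    intro p hp
    rw [Finset.sum_range_succ']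
    have hdiv : (p / q).natDegree < q.natDegree * (n + 1) := by
      rw [← Polynomial.divByMonic_eq_div p hq, Polynomial.natDegree_divByMonic p hq]
      have h2 : q.natDegree * (n + 1 + 1) = q.natDegree * (n + 1) + q.natDegree := by ring
      have h3 : 0 < q.natDegree * (n + 1) := Nat.mul_pos hd (by omega)
      omega
    have hrec : ∀ i, qCoeff q (i + 1) p = qCoeff q i (p / q) := fun i => rfl
    calc p = q * (p /ₘ q) + p %ₘ q := by rw [add_comm, Polynomial.modByMonic_add_div p q]
    _ = (p / q) * q + p % q := by
        rw [Polynomial.modByMonic_eq_mod p hq, Polynomial.divByMonic_eq_div p hq, mul_comm]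
    _ = (∑ i ∈ Finset.range (n + 1), qCoeff q i (p / q) * q ^ i) * q + p % q := by
        rw [← ih (p / q) hdiv]
    _ = _ := by
        rw [Finset.sum_mul]
        congr 1
        · exact Finset.sum_congr rfl fun i _ => by rw [hrec, pow_succ]; ring
        · show p % q = qCoeff q 0 p * q ^ 0
          rw [pow_zero, mul_one]; rfl

lemma trunc_le_val (ν : AddValuation (Polynomial K) (WithTop Γ)) {q : Polynomial K}
    (hq : q.Monic) (hd : 0 < q.natDegree) (p : Polynomial K) : trunc ν q p ≤ ν p := by
  have hexp := qCoeff_expansion hq hd p.natDegree p (by nlinarith)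
  conv_rhs => rw [hexp]
  exact AddValuation.map_le_sum ν fun i hi => Finset.inf_le hi

end AuxLemmas

section AuxLemmas2

variable {K : Type*} [Field K] {Γ : Type*} [AddCommGroup Γ] [LinearOrder Γ] [IsOrderedAddMonoid Γ]

lemma coeff_mod_Xsq (p : Polynomial K) (j : ℕ) (hj : j < 2) :
    (p % X ^ 2).coeff j = p.coeff j := by
  rw [← Polynomial.modByMonic_eq_mod p (monic_X_pow 2),
    Polynomial.modByMonic_eq_sub_mul_div p (X ^ 2), Polynomial.coeff_sub,
    mul_comm, Polynomial.coeff_mul_X_pow', if_neg (by omega), sub_zero]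

lemma coeff_div_Xsq (p : Polynomial K) (j : ℕ) :
    (p / X ^ 2).coeff j = p.coeff (j + 2) := by
  have h := Polynomial.modByMonic_add_div p ((X : Polynomial K) ^ 2)
  have h2 := congrArg (fun r => Polynomial.coeff r (j + 2)) h
  simp only [Polynomial.coeff_add] at h2
  rw [Polynomial.coeff_eq_zero_of_degree_lt
      (lt_of_lt_of_le (Polynomial.degree_modByMonic_lt p (monic_X_pow 2))
        (by rw [Polynomial.degree_X_pow]; exact_mod_cast Nat.le_add_left 2 j)),
    zero_add, mul_comm, Polynomial.coeff_mul_X_pow', if_pos (by omega)] at h2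
  rw [← Polynomial.divByMonic_eq_div p (monic_X_pow 2)]
  simpa using h2

lemma qCoeff_Xsq_coeff : ∀ (i : ℕ) (p : Polynomial K),
    (qCoeff (X ^ 2) i p).coeff 0 = p.coeff (2 * i) ∧
      (qCoeff (X ^ 2) i p).coeff 1 = p.coeff (2 * i + 1) := by
  intro i
  induction i with
  | zero =>
    intro p
    exact ⟨coeff_mod_Xsq p 0 (by omega), coeff_mod_Xsq p 1 (by omega)⟩
  | succ i ih =>
    intro p
    have h0 := (ih (p / X ^ 2)).1
    have h1 := (ih (p / X ^ 2)).2
    rw [coeff_div_Xsq] at h0 h1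
    constructor
    · rw [show 2 * (i + 1) = 2 * i + 2 from by ring]
      exact h0
    · rw [show 2 * (i + 1) + 1 = 2 * i + 1 + 2 from by ring]
      exact h1

lemma qCoeff_Xsq_degree : ∀ (i : ℕ) (p : Polynomial K),
    (qCoeff (X ^ 2) i p).natDegree ≤ 1 := by
  intro i
  induction i with
  | zero =>
    intro p
    have hne : (X ^ 2 : Polynomial K) ≠ 1 := fun h => by
      have := congrArg Polynomial.natDegree h
      simp [Polynomial.natDegree_X_pow] at this
    have := Polynomial.natDegree_modByMonic_lt p (monic_X_pow (R := K) 2) hne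
    rw [Polynomial.natDegree_X_pow] at this
    have h2 : (p %ₘ X ^ 2).natDegree ≤ 1 := by omega
    rwa [Polynomial.modByMonic_eq_mod p (monic_X_pow 2)] at h2
  | succ i ih =>
    intro p
    exact ih (p / X ^ 2)

lemma val_le_coeff (ν : AddValuation (Polynomial K) (WithTop Γ))
    (hxadic : ∀ p : Polynomial K, ν p = trunc ν X p) (p : Polynomial K) (j : ℕ) :
    ν p ≤ ν (C (p.coeff j) * X ^ j) := by
  by_cases hj : j ≤ p.natDegree
  · rw [hxadic p]
    have hmem : j ∈ Finset.range (p.natDegree + 1) := Finset.mem_range.2 (by omega)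
    calc trunc ν X p ≤ ν (qCoeff X j p * X ^ j) := Finset.inf_le hmem
      _ = ν (C (p.coeff j) * X ^ j) := by rw [qCoeff_X_eq]
  · rw [p.coeff_eq_zero_of_natDegree_lt (by omega), map_zero, zero_mul, ν.map_zero]
    exact le_top

lemma val_le_qCoeff_mul (ν : AddValuation (Polynomial K) (WithTop Γ))
    (hxadic : ∀ p : Polynomial K, ν p = trunc ν X p) (p : Polynomial K) (i : ℕ) :
    ν p ≤ ν (qCoeff (X ^ 2) i p * (X ^ 2) ^ i) := by
  set c := qCoeff (X ^ 2) i p with hc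
  have hcc : c = Polynomial.C (c.coeff 1) * X + Polynomial.C (c.coeff 0) :=
    Polynomial.eq_X_add_C_of_natDegree_le_one (qCoeff_Xsq_degree i p)
  have h0 := (qCoeff_Xsq_coeff i p).1
  have h1 := (qCoeff_Xsq_coeff i p).2
  rw [← hc] at h0 h1
  have hXpow : (X ^ 2 : Polynomial K) ^ i = X ^ (2 * i) := by rw [← pow_mul]
  have hexpand : c * (X ^ 2) ^ i =
      C (p.coeff (2 * i + 1)) * X ^ (2 * i + 1) + C (p.coeff (2 * i)) * X ^ (2 * i) := by
    rw [hXpow]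
    conv_lhs => rw [hcc]
    rw [h0, h1]
    ring
  rw [hexpand]
  exact ν.map_le_add (val_le_coeff ν hxadic p (2 * i + 1)) (val_le_coeff ν hxadic p (2 * i))

end AuxLemmas2

section EpsLemmas

variable {K : Type*} [Field K] {Γ : Type*} [AddCommGroup Γ] [LinearOrder Γ] [IsOrderedAddMonoid Γ]

lemma epsSupport_X : epsSupport (X : Polynomial K) = {1} := by
  classical
  unfold epsSupport
  rw [Polynomial.natDegree_X, Finset.Icc_self]
  rw [Finset.filter_singleton]
  rw [if_pos]
  rw [Polynomial.hasseDeriv_one', Polynomial.derivative_X]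
  exact one_ne_zero

lemma hasseDeriv_two_Xsq : Polynomial.hasseDeriv 2 (X ^ 2 : Polynomial K) = 1 := by
  rw [Polynomial.X_pow_eq_monomial, Polynomial.hasseDeriv_monomial]
  simp

lemma eps_X [Module ℚ Γ] (ν : AddValuation (Polynomial K) (WithTop Γ)) :
    eps ν (X : Polynomial K) = aval ν X := by
  have hne : (epsSupport (X : Polynomial K)).Nonempty := by
    rw [epsSupport_X]; exact ⟨1, Finset.mem_singleton_self 1⟩
  unfold eps
  rw [dif_pos hne]
  have : epsSupport (X : Polynomial K) = {1} := epsSupport_X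
  rw [Finset.sup'_congr hne this (fun r _ => rfl), Finset.sup'_singleton]
  rw [Polynomial.hasseDeriv_one', Polynomial.derivative_X]
  have h1 : aval ν (1 : Polynomial K) = 0 := by
    unfold aval
    rw [ν.map_one]
    rfl
  rw [h1, sub_zero]
  norm_num

end EpsLemmas


/-- If `ν` is the `x`-adic valuation on `K[x]` (extending a non-trivial
valuation on `K`), then `ν = ν_{x²}` although `q = x²` is not a key polynomial for `ν`.
In particular the property `ν = ν_q` does not characterize key polynomials. -/
theorem trunc_eq_xsq_not_keyPoly {K : Type*} [Field K] {Γ : Type*}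
    [AddCommGroup Γ] [LinearOrder Γ] [IsOrderedAddMonoid Γ] [Module ℚ Γ] [PosSMulStrictMono ℚ Γ] [PosSMulReflectLT ℚ Γ]
    (ν : AddValuation (Polynomial K) (WithTop Γ)) (hν : TrivialSupport ν)
    (hnontriv : ∃ c : K, c ≠ 0 ∧ ν (C c) ≠ 0)
    (hxadic : ∀ p : Polynomial K, ν p = trunc ν X p) :
    (∀ p : Polynomial K, ν p = trunc ν (X ^ 2) p) ∧ ¬ IsKeyPoly ν (X ^ 2 : Polynomial K) := by
  constructor
  · intro p
    refine le_antisymm ?_ (trunc_le_val ν (monic_X_pow 2)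
      (by rw [Polynomial.natDegree_X_pow]; omega) p)
    exact Finset.le_inf fun i _ => val_le_qCoeff_mul ν hxadic p i
  · -- X^2 is not a key polynomial
    -- ν X is finite
    have hXne : ν (X : Polynomial K) ≠ ⊤ := fun h => Polynomial.X_ne_zero (hν X h)
    obtain ⟨a, ha⟩ := WithTop.ne_top_iff_exists.1 hXne
    have havalX : aval ν (X : Polynomial K) = a := by
      unfold aval; rw [← ha]; rfl
    have havalXsq : aval ν ((X : Polynomial K) ^ 2) = a + a := by
      unfold aval
      rw [pow_two, ν.map_mul, ← ha, ← WithTop.coe_add]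
      rfl
    have haval1 : aval ν (1 : Polynomial K) = 0 := by
      unfold aval; rw [ν.map_one]; rfl
    -- bound on eps ν (X^2)
    have hne : (epsSupport ((X : Polynomial K) ^ 2)).Nonempty := by
      refine ⟨2, ?_⟩
      simp only [epsSupport, Finset.mem_filter, Finset.mem_Icc, Polynomial.natDegree_X_pow]
      exact ⟨⟨by omega, by omega⟩, by rw [hasseDeriv_two_Xsq]; exact one_ne_zero⟩
    have hepsXsq : eps ν ((X : Polynomial K) ^ 2) ≤ a := by
      unfold eps
      rw [dif_pos hne]
      apply Finset.sup'_le
      intro r hr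
      simp only [epsSupport, Finset.mem_filter, Finset.mem_Icc,
        Polynomial.natDegree_X_pow] at hr
      obtain ⟨⟨hr1, hr2⟩, hrd⟩ := hr
      interval_cases r
      · -- r = 1 : hasseDeriv 1 (X^2) = C 2 * X
        have hd1 : Polynomial.hasseDeriv 1 ((X : Polynomial K) ^ 2) =
            Polynomial.C (2 : K) * X := by
          rw [Polynomial.hasseDeriv_one', Polynomial.derivative_X_pow]
          norm_num
        rw [hd1] at hrd ⊢
        have h2K : (2 : K) ≠ 0 := by
          intro h
          rw [h] at hrd
          simp at hrd
        -- ν (C 2) is finite and nonneg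
        have hC2ne : ν (Polynomial.C (2 : K)) ≠ ⊤ := fun h => by
          have := hν _ h
          rw [Polynomial.C_eq_zero] at this
          exact h2K this
        obtain ⟨b, hb⟩ := WithTop.ne_top_iff_exists.1 hC2ne
        have hbnonneg : (0 : Γ) ≤ b := by
          have h11 : (Polynomial.C (2 : K)) = 1 + 1 := by
            rw [← Polynomial.C_1, ← Polynomial.C_add]; norm_num
          have := ν.map_add (1 : Polynomial K) 1
          rw [ν.map_one, min_self, ← h11, ← hb] at this
          exact_mod_cast this
        have havalC2X : aval ν (Polynomial.C (2 : K) * X) = b + a := by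
          unfold aval
          rw [ν.map_mul, ← hb, ← ha, ← WithTop.coe_add]
          rfl
        rw [havalXsq, havalC2X]
        push_cast
        rw [inv_one, one_smul]
        have : a + a - (b + a) = a - b := by abel
        rw [this]
        exact sub_le_self a hbnonneg
      · -- r = 2
        rw [hasseDeriv_two_Xsq, haval1, havalXsq, sub_zero]
        have h2a : a + a = (2 : ℚ) • a := by
          rw [two_smul]
        rw [h2a, smul_smul]
        push_cast
        norm_num
  -- conclude
    rintro ⟨-, -, hkey⟩
    have h1 : (0 : ℕ) < (X : Polynomial K).natDegree := by
      rw [Polynomial.natDegree_X]; omega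
    have h2 : eps ν ((X : Polynomial K) ^ 2) ≤ eps ν (X : Polynomial K) := by
      rw [eps_X, havalX]; exact hepsXsq
    have := hkey X h1 h2
    rw [Polynomial.natDegree_X_pow, Polynomial.natDegree_X] at this
    omega
end

section
/- Let K be a field, ν a valuation on K[x] with trivial support, K̄ an algebraic closure of K, μ an extension of ν to K̄[x], and Λ a complete sequence of key polynomials for ν without last element. For each Q ∈ Λ choose a root a_Q ∈ K̄ of Q with μ(x−a_Q) = δ(Q). Then {a_Q}_{Q∈Λ} is a pseudo-convergent sequence for μ of transcendental type, without a limit in K̄, and x is a limit of it (in K̄[x]). -/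
open Polynomial

section KPAux
variable {Γ : Type*} [AddCommGroup Γ] [LinearOrder Γ] [IsOrderedAddMonoid Γ] {L : Type*} [Field L]

namespace KP

lemma aval_coe {μ : AddValuation (Polynomial L) (WithTop Γ)} (hμ : TrivialSupport μ)
    {f : Polynomial L} (hf : f ≠ 0) : μ f = ((aval μ f : Γ) : WithTop Γ) := by
  have h : μ f ≠ ⊤ := fun h => hf (hμ f h)
  obtain ⟨g, hg⟩ := WithTop.ne_top_iff_exists.mp h
  rw [← hg]
  simp [aval, ← hg]

lemma wt_add_lt_add {u v : Γ} {b d : WithTop Γ} (hb : (u : WithTop Γ) < b)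
    (hd : (v : WithTop Γ) ≤ d) : ((u + v : Γ) : WithTop Γ) < b + d := by
  induction b with
  | top =>
    rw [top_add]
    exact WithTop.coe_lt_top _
  | coe b =>
    induction d with
    | top => rw [add_top]; exact WithTop.coe_lt_top _
    | coe d =>
      rw [← WithTop.coe_add, WithTop.coe_lt_coe] at *
      exact add_lt_add_of_lt_of_le hb (WithTop.coe_le_coe.mp hd)


/-- product of `X - a` over a multiset of roots -/
noncomputable def prodRoots (s : Multiset L) : Polynomial L :=
  (s.map fun a => X - C a).prod

lemma prodRoots_monic (s : Multiset L) : (prodRoots s).Monic :=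
  monic_multiset_prod_of_monic _ _ fun a _ => monic_X_sub_C a

lemma prodRoots_ne_zero (s : Multiset L) : prodRoots s ≠ 0 :=
  (prodRoots_monic s).ne_zero

lemma prodRoots_cons (a : L) (s : Multiset L) :
    prodRoots (a ::ₘ s) = (X - C a) * prodRoots s := by
  simp [prodRoots]

variable (μ : AddValuation (Polynomial L) (WithTop Γ))

/-- the value `μ (X - C a)` in `Γ` -/
noncomputable def mA (a : L) : Γ := aval μ (X - C a)

lemma mu_lin (hμ : TrivialSupport μ) (a : L) :
    μ (X - C a) = ((mA μ a : Γ) : WithTop Γ) :=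
  aval_coe hμ (X_sub_C_ne_zero a)

lemma mu_prodRoots (hμ : TrivialSupport μ) (s : Multiset L) :
    μ (prodRoots s) = (((s.map (mA μ)).sum : Γ) : WithTop Γ) := by
  induction s using Multiset.induction with
  | empty => simp [prodRoots, μ.map_one]
  | cons a s ih =>
    rw [prodRoots_cons, μ.map_mul, ih, mu_lin μ hμ, Multiset.map_cons, Multiset.sum_cons,
      WithTop.coe_add]

lemma hd_linear_mul (a : L) (G : Polynomial L) (r : ℕ) :
    hasseDeriv (r + 1) ((X - C a) * G) =
      (X - C a) * hasseDeriv (r + 1) G + hasseDeriv r G := by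
  rw [hasseDeriv_mul, Finset.Nat.sum_antidiagonal_eq_sum_range_succ
    (f := fun i j => hasseDeriv i (X - C a) * hasseDeriv j G)]
  rw [Finset.sum_range_succ']
  have h0 : hasseDeriv 0 (X - C a) = X - C a := hasseDeriv_zero' _
  have h1 : hasseDeriv 1 (X - C a) = 1 := by
    rw [hasseDeriv_one']
    simp
  have hk : ∀ k, 1 < k → hasseDeriv k (X - C a) = 0 := by
    intro k hk
    rw [map_sub, hasseDeriv_X _ hk, hasseDeriv_C _ _ (by omega), sub_zero]
  rw [Finset.sum_eq_single_of_mem 0 (Finset.mem_range.mpr (by omega))]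
  · simp [h0, h1, add_comm]
  · intro i _ hi
    rw [hk (i + 1) (by omega), zero_mul]


/-- number of elements of `s` whose `μ (X - C a)` equals `δ` -/
noncomputable def mcount (δ : Γ) (s : Multiset L) : ℕ :=
  @Multiset.countP L (fun a => mA μ a = δ) (Classical.decPred _) s

lemma mcount_cons (δ : Γ) (a : L) (s : Multiset L) :
    mcount μ δ (a ::ₘ s) = mcount μ δ s + if mA μ a = δ then 1 else 0 := by
  classical
  simp [mcount, Multiset.countP_cons]

lemma hasse_bound (hμ : TrivialSupport μ) (δ : Γ) (s : Multiset L)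
    (hall : ∀ a ∈ s, mA μ a ≤ δ) :
    (∀ r : ℕ, (((s.map (mA μ)).sum - r • δ : Γ) : WithTop Γ) ≤ μ (hasseDeriv r (prodRoots s)))
    ∧ (∀ r : ℕ, mcount μ δ s < r →
        (((s.map (mA μ)).sum - r • δ : Γ) : WithTop Γ) < μ (hasseDeriv r (prodRoots s)))
    ∧ μ (hasseDeriv (mcount μ δ s) (prodRoots s)) =
        (((s.map (mA μ)).sum - mcount μ δ s • δ : Γ) : WithTop Γ) := by
  induction s using Multiset.induction with
  | empty =>
    have h1 : prodRoots (0 : Multiset L) = 1 := by simp [prodRoots]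
    have hm : mcount μ δ (0 : Multiset L) = 0 := by simp [mcount]
    refine ⟨?_, ?_, ?_⟩
    · intro r
      match r with
      | 0 => simp [h1, hasseDeriv_zero', μ.map_one]
      | r+1 =>
        rw [h1, hasseDeriv_apply_one _ (Nat.succ_pos r), μ.map_zero]
        exact le_top
    · intro r hr
      rw [hm] at hr
      match r, hr with
      | r+1, _ =>
        rw [h1, hasseDeriv_apply_one _ (Nat.succ_pos r), μ.map_zero]
        exact WithTop.coe_lt_top _
    · rw [hm, h1, hasseDeriv_zero', μ.map_one]; simp
  | cons a t ih =>
    obtain ⟨ih1, ih2, ih3⟩ := ih (fun x hx => hall x (Multiset.mem_cons_of_mem hx))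
    have ha : mA μ a ≤ δ := hall a (Multiset.mem_cons_self a t)
    set S : Γ := (t.map (mA μ)).sum with hS
    have hsum : ((a ::ₘ t).map (mA μ)).sum = mA μ a + S := by
      rw [Multiset.map_cons, Multiset.sum_cons]
    set m : ℕ := mcount μ δ t with hm
    have hmc : mcount μ δ (a ::ₘ t) = m + if mA μ a = δ then 1 else 0 := mcount_cons μ δ a t
    have hμG : μ (prodRoots t) = ((S : Γ) : WithTop Γ) := mu_prodRoots μ hμ t
    have hlin := mu_lin μ hμ a
    have hsplit : ∀ (x : Γ) (r : ℕ), ((mA μ a + x - r • δ : Γ) : WithTop Γ)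
        = ((mA μ a : Γ) : WithTop Γ) + ((x - r • δ : Γ) : WithTop Γ) := by
      intro x r
      rw [← WithTop.coe_add]
      congr 1
      abel
    rw [hsum, hmc]
    have part1 : ∀ r : ℕ, ((mA μ a + S - r • δ : Γ) : WithTop Γ)
        ≤ μ (hasseDeriv r (prodRoots (a ::ₘ t))) := by
      intro r
      match r with
      | 0 =>
        rw [hasseDeriv_zero', prodRoots_cons, μ.map_mul, hlin, hμG, ← WithTop.coe_add]
        simp
      | r+1 =>
        rw [prodRoots_cons, hd_linear_mul]
        refine μ.map_le_add ?_ ?_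
        · rw [μ.map_mul, hlin, hsplit]
          exact add_le_add_right (ih1 (r+1)) _
        · refine le_trans ?_ (ih1 r)
          rw [WithTop.coe_le_coe, succ_nsmul]
          have heq : mA μ a + S - (r • δ + δ) = (S - r • δ) + (mA μ a - δ) := by abel
          rw [heq]
          exact (add_le_iff_nonpos_right _).mpr (sub_nonpos.mpr ha)
    refine ⟨part1, ?_, ?_⟩
    · intro r hr
      match r, hr with
      | r+1, hr =>
        rw [prodRoots_cons, hd_linear_mul]
        by_cases hc : mA μ a = δ
        · rw [if_pos hc] at hr
          refine μ.map_lt_add ?_ ?_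
          · rw [μ.map_mul, hlin, hsplit]
            exact WithTop.add_lt_add_left WithTop.coe_ne_top (ih2 (r+1) (by omega))
          · have heq : (mA μ a + S - (r+1) • δ : Γ) = S - r • δ := by
              rw [hc, succ_nsmul]; abel
            rw [heq]
            exact ih2 r (by omega)
        · have hma : mA μ a < δ := lt_of_le_of_ne ha hc
          rw [if_neg hc, add_zero] at hr
          refine μ.map_lt_add ?_ ?_
          · rw [μ.map_mul, hlin, hsplit]
            exact WithTop.add_lt_add_left WithTop.coe_ne_top (ih2 (r+1) (by omega))
          · refine lt_of_lt_of_le ?_ (ih1 r)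
            rw [WithTop.coe_lt_coe, succ_nsmul]
            have heq : mA μ a + S - (r • δ + δ) = (S - r • δ) + (mA μ a - δ) := by abel
            rw [heq]
            calc (S - r • δ) + (mA μ a - δ) < (S - r • δ) + 0 :=
                add_lt_add_right (sub_neg.mpr hma) _
              _ = S - r • δ := add_zero _
    · by_cases hc : mA μ a = δ
      · rw [if_pos hc, prodRoots_cons, hd_linear_mul]
        have hxy : μ (hasseDeriv m (prodRoots t))
            < μ ((X - C a) * hasseDeriv (m+1) (prodRoots t)) := by
          rw [μ.map_mul, hlin, ih3]
          calc ((S - m • δ : Γ) : WithTop Γ)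
              = ((mA μ a : Γ) : WithTop Γ) + ((S - (m+1) • δ : Γ) : WithTop Γ) := by
                rw [← WithTop.coe_add, hc, succ_nsmul]
                congr 1
                abel
            _ < ((mA μ a : Γ) : WithTop Γ) + μ (hasseDeriv (m+1) (prodRoots t)) :=
                WithTop.add_lt_add_left WithTop.coe_ne_top (ih2 (m+1) (by omega))
        rw [AddValuation.map_add_eq_of_lt_right _ hxy, ih3]
        congr 1
        rw [hc, succ_nsmul]
        abel
      · have hma : mA μ a < δ := lt_of_le_of_ne ha hc
        rw [if_neg hc, add_zero]
        match hm2 : m with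
        | 0 =>
          rw [hasseDeriv_zero', prodRoots_cons, μ.map_mul, hlin, hμG, ← WithTop.coe_add]
          congr 1
          simp
        | m'+1 =>
          rw [prodRoots_cons, hd_linear_mul]
          have hx : μ ((X - C a) * hasseDeriv (m'+1) (prodRoots t))
              = ((mA μ a + S - (m'+1) • δ : Γ) : WithTop Γ) := by
            rw [μ.map_mul, hlin, ih3]
            exact (hsplit S (m'+1)).symm
          have hxy : μ ((X - C a) * hasseDeriv (m'+1) (prodRoots t))
              < μ (hasseDeriv m' (prodRoots t)) := by
            rw [hx]
            refine lt_of_lt_of_le ?_ (ih1 m')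
            rw [WithTop.coe_lt_coe, succ_nsmul]
            have heq : mA μ a + S - (m' • δ + δ) = (S - m' • δ) + (mA μ a - δ) := by abel
            rw [heq]
            calc (S - m' • δ) + (mA μ a - δ) < (S - m' • δ) + 0 :=
                add_lt_add_right (sub_neg.mpr hma) _
              _ = S - m' • δ := add_zero _
          rw [AddValuation.map_add_eq_of_lt_left _ hxy, hx]


lemma mem_epsSupport {K : Type*} [Field K] {f : Polynomial K} {r : ℕ} :
    r ∈ epsSupport f ↔ (1 ≤ r ∧ r ≤ f.natDegree) ∧ f.hasseDeriv r ≠ 0 := by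
  rw [epsSupport, @Finset.mem_filter _ _ (Classical.decPred _), Finset.mem_Icc]

section EpsDelta
variable {K : Type*} [Field K] [Algebra K L] [IsAlgClosure K L]

lemma delta_bound (μ : AddValuation (Polynomial L) (WithTop Γ)) (f : Polynomial K)
    (hf : 0 < f.natDegree) :
    (∀ a ∈ (f.map (algebraMap K L)).roots, mA μ a ≤ delta μ f) ∧
    ∃ a ∈ (f.map (algebraMap K L)).roots, mA μ a = delta μ f := by
  letI := Classical.decEq L
  haveI : IsAlgClosed L := IsAlgClosure.isAlgClosed K
  have hf0 : f ≠ 0 := fun h => by simp [h] at hf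
  have hsp : Splits (f.map (algebraMap K L)) := IsAlgClosed.splits _
  have hcard : f.natDegree = Multiset.card (f.map (algebraMap K L)).roots :=
    (natDegree_map _).symm.trans hsp.natDegree_eq_card_roots
  have hne : ((f.map (algebraMap K L)).roots.toFinset).Nonempty := by
    rw [Multiset.toFinset_nonempty]
    intro h
    rw [h] at hcard
    simp at hcard
    omega
  have hdel : delta μ f = ((f.map (algebraMap K L)).roots.toFinset).sup' hne
      (fun a => aval μ (X - C a)) := by
    unfold delta
    rw [dif_pos hne]
  constructor
  · intro a ha
    rw [hdel]
    exact Finset.le_sup' _ (Multiset.mem_toFinset.mpr ha)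
  · obtain ⟨a, ha, heq⟩ := Finset.exists_mem_eq_sup' hne (fun a => aval μ (X - C a))
    refine ⟨a, Multiset.mem_toFinset.mp ha, ?_⟩
    rw [mA, hdel, heq]

variable [Module ℚ Γ] [PosSMulStrictMono ℚ Γ]

lemma eps_eq_delta {ν : AddValuation (Polynomial K) (WithTop Γ)}
    {μ : AddValuation (Polynomial L) (WithTop Γ)} (hν : TrivialSupport ν)
    (hμ : TrivialSupport μ) (hext : IsExtension μ ν) (f : Polynomial K)
    (hf : 0 < f.natDegree) : eps ν f = delta μ f := by
  haveI : IsAlgClosed L := IsAlgClosure.isAlgClosed K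
  have hf0 : f ≠ 0 := fun h => by simp [h] at hf
  set F := f.map (algebraMap K L) with hF
  have hFne : F ≠ 0 := (Polynomial.map_ne_zero_iff (algebraMap K L).injective).mpr hf0
  have hsp : Splits (f.map (algebraMap K L)) := IsAlgClosed.splits _
  set s := F.roots with hs
  set lc := (algebraMap K L) f.leadingCoeff with hlc
  have hprod : F = C lc * prodRoots s := by
    have h := hsp.eq_prod_roots; rw [leadingCoeff_map] at h; exact h
  have hlcne : C lc ≠ 0 := by
    intro h
    rw [h, zero_mul] at hprod
    exact hFne hprod
  have hmapHD : ∀ r, (hasseDeriv r f).map (algebraMap K L) = hasseDeriv r F := by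
    intro r
    ext n
    simp [hF, Polynomial.coeff_map, Polynomial.hasseDeriv_coeff, map_mul, map_natCast]
  have hHDF : ∀ r, hasseDeriv r F = C lc * hasseDeriv r (prodRoots s) := by
    intro r
    rw [hprod, ← smul_eq_C_mul, LinearMap.map_smul, smul_eq_C_mul]
  have hval : ∀ g : Polynomial K, ν g = μ (g.map (algebraMap K L)) := fun g => (hext g).symm
  set d := delta μ f with hd
  obtain ⟨hub, a₀, ha₀s, ha₀⟩ := delta_bound μ f hf
  set m₀ := mcount μ d s with hm
  have hm₀pos : 0 < m₀ := by
    rw [hm, mcount]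
    exact (@Multiset.countP_pos L (fun a => mA μ a = d) (Classical.decPred _) s).mpr
      ⟨a₀, ha₀s, ha₀⟩
  have hcard : Multiset.card s = f.natDegree := ((natDegree_map _).symm.trans hsp.natDegree_eq_card_roots).symm
  have hm₀le : m₀ ≤ f.natDegree := by
    rw [hm, mcount, ← hcard]
    exact @Multiset.countP_le_card L (fun a => mA μ a = d) (Classical.decPred _) s
  obtain ⟨hb1, hb2, hb3⟩ := hasse_bound μ hμ d s hub
  set Ssum := (s.map (mA μ)).sum with hSsum
  have hμCF : μ (C lc) = ((aval μ (C lc) : Γ) : WithTop Γ) := aval_coe hμ hlcne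
  set cl := aval μ (C lc) with hcl
  have hνf : ν f = ((cl + Ssum : Γ) : WithTop Γ) := by
    rw [hval f, ← hF, hprod, μ.map_mul, hμCF, mu_prodRoots μ hμ, ← WithTop.coe_add]
  have havf : aval ν f = cl + Ssum := by rw [aval, hνf, WithTop.untopD_coe]
  have hνHD : ∀ r, ν (hasseDeriv r f) = μ (C lc) + μ (hasseDeriv r (prodRoots s)) := by
    intro r
    rw [hval, hmapHD, hHDF, μ.map_mul]
  have hνm₀ : ν (hasseDeriv m₀ f) = ((cl + (Ssum - m₀ • d) : Γ) : WithTop Γ) := by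
    rw [hνHD m₀, hμCF, hb3, ← WithTop.coe_add]
  have hne0 : hasseDeriv m₀ f ≠ 0 := by
    intro h0
    rw [h0, ν.map_zero] at hνm₀
    exact (WithTop.top_ne_coe) hνm₀
  have hm₀mem : m₀ ∈ epsSupport f :=
    mem_epsSupport.mpr ⟨⟨hm₀pos, hm₀le⟩, hne0⟩
  set fn : ℕ → Γ := fun r => ((r:ℚ)⁻¹) • (aval ν f - aval ν (hasseDeriv r f)) with hfn
  have hub' : ∀ r ∈ epsSupport f, fn r ≤ d := by
    intro r hr
    obtain ⟨⟨hr1, hr2⟩, hrne⟩ := mem_epsSupport.mp hr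
    have hge : ((cl + (Ssum - r • d) : Γ) : WithTop Γ) ≤ ν (hasseDeriv r f) := by
      rw [hνHD r, hμCF, WithTop.coe_add]
      exact add_le_add_right (hb1 r) _
    rw [aval_coe hν hrne, WithTop.coe_le_coe] at hge
    have hsub : aval ν f - aval ν (hasseDeriv r f) ≤ r • d := by
      rw [havf]
      have h2 := sub_le_sub_left hge (cl + Ssum)
      refine le_trans h2 (le_of_eq ?_)
      abel
    have hrQ : (0:ℚ) < (r:ℚ) := by exact_mod_cast hr1
    calc fn r = ((r:ℚ)⁻¹) • (aval ν f - aval ν (hasseDeriv r f)) := rfl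
      _ ≤ ((r:ℚ)⁻¹) • ((r:ℚ) • d) := by
          refine smul_le_smul_of_nonneg_left ?_ (le_of_lt (inv_pos.mpr hrQ))
          rw [Nat.cast_smul_eq_nsmul]
          exact hsub
      _ = d := inv_smul_smul₀ (ne_of_gt hrQ) d
  have heqm₀ : fn m₀ = d := by
    have havm₀ : aval ν (hasseDeriv m₀ f) = cl + (Ssum - m₀ • d) := by
      rw [aval, hνm₀, WithTop.untopD_coe]
    have hsub : aval ν f - aval ν (hasseDeriv m₀ f) = m₀ • d := by
      rw [havf, havm₀]
      abel
    have hm₀Q : ((m₀:ℚ)) ≠ 0 := by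
      simp only [ne_eq, Nat.cast_eq_zero]
      omega
    rw [hfn]
    simp only []
    rw [hsub, ← Nat.cast_smul_eq_nsmul ℚ, inv_smul_smul₀ hm₀Q]
  have hEps : eps ν f = (epsSupport f).sup' ⟨m₀, hm₀mem⟩ fn := by
    unfold eps
    rw [dif_pos ⟨m₀, hm₀mem⟩]
  rw [hEps]
  exact le_antisymm (Finset.sup'_le _ _ hub') (heqm₀ ▸ Finset.le_sup' fn hm₀mem)

end EpsDelta


section Gauss

lemma wt_solve {a c : Γ} {x : WithTop Γ} (h : x + ((a : Γ) : WithTop Γ) = ((c : Γ) : WithTop Γ)) :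
    x = ((c - a : Γ) : WithTop Γ) := by
  induction x with
  | top => rw [top_add] at h; exact absurd h (by simp)
  | coe x =>
    rw [← WithTop.coe_add, WithTop.coe_inj] at h
    rw [WithTop.coe_inj]
    exact eq_sub_of_add_eq h

lemma wt_lt_shift {c w : Γ} {X : WithTop Γ} (h : ((c : Γ) : WithTop Γ) < X + ((w : Γ) : WithTop Γ)) :
    ((c - w : Γ) : WithTop Γ) < X := by
  induction X with
  | top => exact WithTop.coe_lt_top _
  | coe x =>
    rw [← WithTop.coe_add, WithTop.coe_lt_coe] at h
    exact WithTop.coe_lt_coe.mpr (sub_lt_iff_lt_add.mpr h)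

variable (μ : AddValuation (Polynomial L) (WithTop Γ)) (γ : Γ) (b : L)

noncomputable def gaussC (G : Polynomial L) : WithTop Γ :=
  (Finset.range (G.natDegree + 1)).inf fun j => μ (C (G.coeff j)) + ((j • γ : Γ) : WithTop Γ)

lemma gaussC_zero : gaussC μ γ (0 : Polynomial L) = ⊤ := by
  simp [gaussC, μ.map_zero]

lemma gaussC_le (G : Polynomial L) (j : ℕ) :
    gaussC μ γ G ≤ μ (C (G.coeff j)) + ((j • γ : Γ) : WithTop Γ) := by
  by_cases hj : j ≤ G.natDegree
  · exact Finset.inf_le (Finset.mem_range.mpr (by omega))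
  · rw [coeff_eq_zero_of_natDegree_lt (by omega), Polynomial.C_0, μ.map_zero, top_add]
    exact le_top

lemma le_gaussC {G : Polynomial L} {c : WithTop Γ}
    (h : ∀ j, c ≤ μ (C (G.coeff j)) + ((j • γ : Γ) : WithTop Γ)) : c ≤ gaussC μ γ G :=
  Finset.le_inf fun j _ => h j

lemma gaussC_ne_top (hμ : TrivialSupport μ) {G : Polynomial L} (hG : G ≠ 0) :
    gaussC μ γ G ≠ ⊤ := by
  intro h
  have h1 := gaussC_le μ γ G G.natDegree
  rw [h, top_le_iff] at h1
  have h2 : C (G.coeff G.natDegree) ≠ 0 := by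
    rw [ne_eq, Polynomial.C_eq_zero]
    exact leadingCoeff_ne_zero.mpr hG
  rw [aval_coe hμ h2, ← WithTop.coe_add] at h1
  exact WithTop.coe_ne_top h1

lemma gaussC_mul (hμ : TrivialSupport μ) (G₁ G₂ : Polynomial L) :
    gaussC μ γ (G₁ * G₂) = gaussC μ γ G₁ + gaussC μ γ G₂ := by
  classical
  by_cases h1 : G₁ = 0
  · rw [h1, zero_mul, gaussC_zero, top_add]
  by_cases h2 : G₂ = 0
  · rw [h2, mul_zero, gaussC_zero, add_top]
  obtain ⟨u, hu⟩ := WithTop.ne_top_iff_exists.mp (gaussC_ne_top μ γ hμ h1)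
  obtain ⟨v, hv⟩ := WithTop.ne_top_iff_exists.mp (gaussC_ne_top μ γ hμ h2)
  -- bound for every term of every coefficient
  have hterm : ∀ (k : ℕ), ∀ ij ∈ Finset.HasAntidiagonal.antidiagonal k,
      gaussC μ γ G₁ + gaussC μ γ G₂
        ≤ μ (C (G₁.coeff ij.1 * G₂.coeff ij.2)) + ((k • γ : Γ) : WithTop Γ) := by
    intro k ij hij
    have hk : ij.1 + ij.2 = k := Finset.HasAntidiagonal.mem_antidiagonal.mp hij
    calc gaussC μ γ G₁ + gaussC μ γ G₂
        ≤ (μ (C (G₁.coeff ij.1)) + ((ij.1 • γ : Γ) : WithTop Γ))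
          + (μ (C (G₂.coeff ij.2)) + ((ij.2 • γ : Γ) : WithTop Γ)) :=
          add_le_add (gaussC_le μ γ G₁ ij.1) (gaussC_le μ γ G₂ ij.2)
      _ = μ (C (G₁.coeff ij.1 * G₂.coeff ij.2)) + ((k • γ : Γ) : WithTop Γ) := by
          rw [Polynomial.C_mul, μ.map_mul, add_add_add_comm, ← WithTop.coe_add, ← add_nsmul, hk]
  have hcoeff : ∀ k : ℕ, (G₁ * G₂).coeff k
      = ∑ ij ∈ Finset.HasAntidiagonal.antidiagonal k, G₁.coeff ij.1 * G₂.coeff ij.2 := fun k => coeff_mul G₁ G₂ k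
  refine le_antisymm ?_ ?_
  · -- ≤ : exhibit the minimal indices
    have hex₁ : ∃ i, μ (C (G₁.coeff i)) + ((i • γ : Γ) : WithTop Γ) = gaussC μ γ G₁ := by
      obtain ⟨i, _, hi⟩ := Finset.exists_mem_eq_inf (Finset.range (G₁.natDegree + 1))
        ⟨0, by simp⟩ (fun j => μ (C (G₁.coeff j)) + ((j • γ : Γ) : WithTop Γ))
      exact ⟨i, hi.symm⟩
    have hex₂ : ∃ i, μ (C (G₂.coeff i)) + ((i • γ : Γ) : WithTop Γ) = gaussC μ γ G₂ := by
      obtain ⟨i, _, hi⟩ := Finset.exists_mem_eq_inf (Finset.range (G₂.natDegree + 1))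
        ⟨0, by simp⟩ (fun j => μ (C (G₂.coeff j)) + ((j • γ : Γ) : WithTop Γ))
      exact ⟨i, hi.symm⟩
    set i₀ := Nat.find hex₁ with hi₀def
    set j₀ := Nat.find hex₂ with hj₀def
    have hP₁i₀ : μ (C (G₁.coeff i₀)) + ((i₀ • γ : Γ) : WithTop Γ) = ((u : Γ) : WithTop Γ) := by
      rw [hu]; exact Nat.find_spec hex₁
    have hP₂j₀ : μ (C (G₂.coeff j₀)) + ((j₀ • γ : Γ) : WithTop Γ) = ((v : Γ) : WithTop Γ) := by
      rw [hv]; exact Nat.find_spec hex₂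
    have hstrict₁ : ∀ i < i₀, ((u : Γ) : WithTop Γ)
        < μ (C (G₁.coeff i)) + ((i • γ : Γ) : WithTop Γ) := by
      intro i hi
      refine lt_of_le_of_ne (by rw [hu]; exact gaussC_le μ γ G₁ i) ?_
      intro heq
      exact Nat.find_min hex₁ hi (by rw [← heq, hu])
    have hstrict₂ : ∀ j < j₀, ((v : Γ) : WithTop Γ)
        < μ (C (G₂.coeff j)) + ((j • γ : Γ) : WithTop Γ) := by
      intro j hj
      refine lt_of_le_of_ne (by rw [hv]; exact gaussC_le μ γ G₂ j) ?_
      intro heq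
      exact Nat.find_min hex₂ hj (by rw [← heq, hv])
    set k₀ := i₀ + j₀ with hk₀
    have hμc₁ : μ (C (G₁.coeff i₀)) = ((u - i₀ • γ : Γ) : WithTop Γ) := wt_solve hP₁i₀
    have hμc₂ : μ (C (G₂.coeff j₀)) = ((v - j₀ • γ : Γ) : WithTop Γ) := wt_solve hP₂j₀
    have hmem₀ : ((i₀, j₀) : ℕ × ℕ) ∈ Finset.HasAntidiagonal.antidiagonal k₀ := Finset.HasAntidiagonal.mem_antidiagonal.mpr rfl
    have hsplitsum : (G₁ * G₂).coeff k₀ = G₁.coeff i₀ * G₂.coeff j₀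
        + ∑ ij ∈ (Finset.HasAntidiagonal.antidiagonal k₀).erase (i₀, j₀), G₁.coeff ij.1 * G₂.coeff ij.2 := by
      rw [hcoeff k₀]
      exact (Finset.add_sum_erase _ _ hmem₀).symm
    have hrest : ((u + v - k₀ • γ : Γ) : WithTop Γ)
        < μ (∑ ij ∈ (Finset.HasAntidiagonal.antidiagonal k₀).erase (i₀, j₀),
            C (G₁.coeff ij.1 * G₂.coeff ij.2)) := by
      refine μ.map_lt_sum WithTop.coe_ne_top ?_
      intro ij hij
      obtain ⟨hne, hmem⟩ := Finset.mem_erase.mp hij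
      have hk : ij.1 + ij.2 = k₀ := Finset.HasAntidiagonal.mem_antidiagonal.mp hmem
      have hone : ((u + v : Γ) : WithTop Γ)
          < μ (C (G₁.coeff ij.1 * G₂.coeff ij.2)) + ((k₀ • γ : Γ) : WithTop Γ) := by
        have hij1 : ij.1 ≠ i₀ := by
          intro h
          apply hne
          have : ij.2 = j₀ := by omega
          exact Prod.ext h this
        rcases lt_or_gt_of_ne hij1 with hlt | hgt
        · have := wt_add_lt_add (hstrict₁ ij.1 hlt)
            (le_trans (le_of_eq hv) (gaussC_le μ γ G₂ ij.2))
          calc ((u + v : Γ) : WithTop Γ)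
              < (μ (C (G₁.coeff ij.1)) + ((ij.1 • γ : Γ) : WithTop Γ))
                + (μ (C (G₂.coeff ij.2)) + ((ij.2 • γ : Γ) : WithTop Γ)) := this
            _ = μ (C (G₁.coeff ij.1 * G₂.coeff ij.2)) + ((k₀ • γ : Γ) : WithTop Γ) := by
                rw [Polynomial.C_mul, μ.map_mul, ← hk, add_nsmul, WithTop.coe_add]
                abel
        · have hjlt : ij.2 < j₀ := by omega
          have := wt_add_lt_add (hstrict₂ ij.2 hjlt)
            (le_trans (le_of_eq hu) (gaussC_le μ γ G₁ ij.1))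
          calc ((u + v : Γ) : WithTop Γ)
              = ((v + u : Γ) : WithTop Γ) := by rw [add_comm]
            _ < (μ (C (G₂.coeff ij.2)) + ((ij.2 • γ : Γ) : WithTop Γ))
                + (μ (C (G₁.coeff ij.1)) + ((ij.1 • γ : Γ) : WithTop Γ)) := this
            _ = μ (C (G₁.coeff ij.1 * G₂.coeff ij.2)) + ((k₀ • γ : Γ) : WithTop Γ) := by
                rw [Polynomial.C_mul, μ.map_mul, ← hk, add_nsmul, WithTop.coe_add]
                abel
      exact wt_lt_shift hone
    have hmain : μ (C ((G₁ * G₂).coeff k₀)) = ((u + v - k₀ • γ : Γ) : WithTop Γ) := by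
      rw [hsplitsum, Polynomial.C_add, map_sum]
      rw [AddValuation.map_add_eq_of_lt_left]
      · rw [Polynomial.C_mul, μ.map_mul, hμc₁, hμc₂, ← WithTop.coe_add]
        congr 1
        rw [hk₀, add_nsmul]
        abel
      · rw [Polynomial.C_mul, μ.map_mul, hμc₁, hμc₂, ← WithTop.coe_add]
        have heq : (u - i₀ • γ) + (v - j₀ • γ) = u + v - k₀ • γ := by
          rw [hk₀, add_nsmul]; abel
        rw [heq]
        exact hrest
    calc gaussC μ γ (G₁ * G₂) ≤ μ (C ((G₁ * G₂).coeff k₀)) + ((k₀ • γ : Γ) : WithTop Γ) :=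
        gaussC_le μ γ _ k₀
      _ = gaussC μ γ G₁ + gaussC μ γ G₂ := by
        rw [hmain, ← hu, ← hv, ← WithTop.coe_add, ← WithTop.coe_add]
        congr 1
        abel
  · -- ≥
    refine le_gaussC μ γ ?_
    intro k
    have hCsum : C ((G₁ * G₂).coeff k)
        = ∑ ij ∈ Finset.HasAntidiagonal.antidiagonal k, C (G₁.coeff ij.1 * G₂.coeff ij.2) := by
      rw [hcoeff k, map_sum]
    obtain ⟨ij₀, hij₀mem, hinf⟩ := Finset.exists_mem_eq_inf (Finset.HasAntidiagonal.antidiagonal k)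
      ⟨(0, k), Finset.HasAntidiagonal.mem_antidiagonal.mpr (zero_add k)⟩
      (fun ij => μ (C (G₁.coeff ij.1 * G₂.coeff ij.2)))
    have hgle : (Finset.HasAntidiagonal.antidiagonal k).inf (fun ij => μ (C (G₁.coeff ij.1 * G₂.coeff ij.2)))
        ≤ μ (C ((G₁ * G₂).coeff k)) := by
      rw [hCsum]
      exact μ.map_le_sum fun ij hij => Finset.inf_le hij
    calc gaussC μ γ G₁ + gaussC μ γ G₂
        ≤ μ (C (G₁.coeff ij₀.1 * G₂.coeff ij₀.2)) + ((k • γ : Γ) : WithTop Γ) :=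
          hterm k ij₀ hij₀mem
      _ = (Finset.HasAntidiagonal.antidiagonal k).inf (fun ij => μ (C (G₁.coeff ij.1 * G₂.coeff ij.2)))
          + ((k • γ : Γ) : WithTop Γ) := by rw [← hinf]
      _ ≤ μ (C ((G₁ * G₂).coeff k)) + ((k • γ : Γ) : WithTop Γ) := add_le_add_left hgle _

noncomputable def gaussAt (H : Polynomial L) : WithTop Γ := gaussC μ γ (H.comp (X + C b))

lemma comp_linear_cancel (H : Polynomial L) : (H.comp (X + C b)).comp (X - C b) = H := by
  rw [comp_assoc, add_comp, X_comp, C_comp]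
  simp

lemma comp_linear_ne_zero {H : Polynomial L} (hH : H ≠ 0) : H.comp (X + C b) ≠ 0 := by
  intro h
  apply hH
  rw [← comp_linear_cancel b H, h, zero_comp]

lemma gaussAt_ne_top (hμ : TrivialSupport μ) {H : Polynomial L} (hH : H ≠ 0) :
    gaussAt μ γ b H ≠ ⊤ :=
  gaussC_ne_top μ γ hμ (comp_linear_ne_zero b hH)

lemma gaussAt_zero : gaussAt μ γ b 0 = ⊤ := by rw [gaussAt, zero_comp, gaussC_zero]

lemma gaussAt_mul (hμ : TrivialSupport μ) (H₁ H₂ : Polynomial L) :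
    gaussAt μ γ b (H₁ * H₂) = gaussAt μ γ b H₁ + gaussAt μ γ b H₂ := by
  rw [gaussAt, mul_comp, gaussC_mul μ γ hμ]
  rfl

lemma gaussAt_C (c : L) : gaussAt μ γ b (C c) = μ (C c) := by
  rw [gaussAt, C_comp, gaussC, natDegree_C]
  simp [coeff_C]

lemma gaussAt_one : gaussAt μ γ b 1 = 0 := by
  rw [← Polynomial.C_1, gaussAt_C, Polynomial.C_1, μ.map_one]

lemma gaussAt_add (H₁ H₂ : Polynomial L) :
    min (gaussAt μ γ b H₁) (gaussAt μ γ b H₂) ≤ gaussAt μ γ b (H₁ + H₂) := by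
  conv_rhs => rw [gaussAt, add_comp]
  refine le_gaussC μ γ ?_
  intro j
  calc min (gaussAt μ γ b H₁) (gaussAt μ γ b H₂)
      ≤ min (μ (C ((H₁.comp (X + C b)).coeff j)) + ((j • γ : Γ) : WithTop Γ))
          (μ (C ((H₂.comp (X + C b)).coeff j)) + ((j • γ : Γ) : WithTop Γ)) :=
        min_le_min (gaussC_le μ γ _ j) (gaussC_le μ γ _ j)
    _ = min (μ (C ((H₁.comp (X + C b)).coeff j))) (μ (C ((H₂.comp (X + C b)).coeff j)))
          + ((j • γ : Γ) : WithTop Γ) := min_add_add_right _ _ _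
    _ ≤ μ (C ((H₁.comp (X + C b) + H₂.comp (X + C b)).coeff j)) + ((j • γ : Γ) : WithTop Γ) := by
        refine add_le_add_left ?_ _
        rw [coeff_add, Polynomial.C_add]
        exact μ.map_add _ _

lemma le_gaussAt_sum {ι : Type*} {s : Finset ι} {u : ι → Polynomial L} {c : WithTop Γ}
    (h : ∀ i ∈ s, c ≤ gaussAt μ γ b (u i)) : c ≤ gaussAt μ γ b (∑ i ∈ s, u i) := by
  induction s using Finset.cons_induction with
  | empty => rw [Finset.sum_empty, gaussAt_zero]; exact le_top
  | cons i s his ih =>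
    rw [Finset.sum_cons]
    refine le_trans (le_min (h i (Finset.mem_cons_self i s))
      (ih fun j hj => h j (Finset.mem_cons_of_mem hj))) (gaussAt_add μ γ b _ _)

lemma gaussAt_linear (a : L) :
    gaussAt μ γ b (X - C a) = min (μ (C (b - a))) ((γ : Γ) : WithTop Γ) := by
  have hcomp : (X - C a).comp (X + C b) = X + C (b - a) := by
    rw [sub_comp, X_comp, C_comp, Polynomial.C_sub]
    ring
  rw [gaussAt, hcomp, gaussC, natDegree_X_add_C]
  have h2 : Finset.range (1 + 1) = {0, 1} := rfl
  rw [h2, Finset.inf_insert, Finset.inf_singleton]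
  have hc0 : (X + C (b - a)).coeff 0 = b - a := by simp
  have hc1 : (X + C (b - a)).coeff 1 = 1 := by simp
  simp only [hc0, hc1, Polynomial.C_1, μ.map_one, zero_nsmul, one_nsmul, WithTop.coe_zero,
    add_zero, zero_add]

lemma gaussAt_linear_le (a : L) (hγb : ((γ : Γ) : WithTop Γ) ≤ μ (X - C b)) :
    gaussAt μ γ b (X - C a) ≤ μ (X - C a) := by
  rw [gaussAt_linear]
  have heq : X - C a = (X - C b) + C (b - a) := by
    rw [Polynomial.C_sub]
    ring
  rw [heq]
  refine le_trans ?_ (μ.map_add _ _)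
  exact le_min (le_trans (min_le_right _ _) hγb) (min_le_left _ _)

lemma gaussAt_linear_eq (a : L) (hlt : μ (X - C a) < μ (X - C b))
    (hlt2 : μ (X - C a) < ((γ : Γ) : WithTop Γ)) :
    gaussAt μ γ b (X - C a) = μ (X - C a) := by
  rw [gaussAt_linear]
  have hC : μ (C (b - a)) = μ (X - C a) := by
    have heq : C (b - a) = (X - C a) - (X - C b) := by
      rw [Polynomial.C_sub]
      ring
    rw [heq, AddValuation.map_sub_eq_of_lt_left _ hlt]
  rw [hC, min_eq_left (le_of_lt hlt2)]

lemma gaussAt_prodRoots (hμ : TrivialSupport μ) (s : Multiset L)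
    (h : ∀ a ∈ s, gaussAt μ γ b (X - C a) = μ (X - C a)) :
    gaussAt μ γ b (prodRoots s) = μ (prodRoots s) := by
  induction s using Multiset.induction with
  | empty =>
    show gaussAt μ γ b (prodRoots 0) = μ (prodRoots 0)
    have : prodRoots (0 : Multiset L) = 1 := by simp [prodRoots]
    rw [this, gaussAt_one, μ.map_one]
  | cons a t ih =>
    rw [prodRoots_cons, gaussAt_mul μ γ b hμ, μ.map_mul,
      h a (Multiset.mem_cons_self a t), ih fun x hx => h x (Multiset.mem_cons_of_mem hx)]

lemma gaussAt_prodRoots_le (hμ : TrivialSupport μ) (s : Multiset L)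
    (h : ∀ a ∈ s, gaussAt μ γ b (X - C a) ≤ μ (X - C a)) :
    gaussAt μ γ b (prodRoots s) ≤ μ (prodRoots s) := by
  induction s using Multiset.induction with
  | empty =>
    show gaussAt μ γ b (prodRoots 0) ≤ μ (prodRoots 0)
    have : prodRoots (0 : Multiset L) = 1 := by simp [prodRoots]
    rw [this, gaussAt_one, μ.map_one]
  | cons a t ih =>
    rw [prodRoots_cons, gaussAt_mul μ γ b hμ, μ.map_mul]
    exact add_le_add (h a (Multiset.mem_cons_self a t))
      (ih fun x hx => h x (Multiset.mem_cons_of_mem hx))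

lemma gaussAt_eq_mu (hμ : TrivialSupport μ) [IsAlgClosed L] {H : Polynomial L} (hH : H ≠ 0)
    (h : ∀ a ∈ H.roots, gaussAt μ γ b (X - C a) = μ (X - C a)) :
    gaussAt μ γ b H = μ H := by
  have hfac : H = C H.leadingCoeff * prodRoots H.roots :=
    (IsAlgClosed.splits H).eq_prod_roots
  conv_lhs => rw [hfac]
  conv_rhs => rw [hfac]
  rw [gaussAt_mul μ γ b hμ, μ.map_mul, gaussAt_C, gaussAt_prodRoots μ γ b hμ _ h]

lemma gaussAt_lt_mu (hμ : TrivialSupport μ) [IsAlgClosed L] {H : Polynomial L} (hH : H ≠ 0)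
    (hb : b ∈ H.roots) (hγβ : ((γ : Γ) : WithTop Γ) < μ (X - C b))
    (hle : ∀ a ∈ H.roots, gaussAt μ γ b (X - C a) ≤ μ (X - C a)) :
    gaussAt μ γ b H < μ H := by
  classical
  have hfac : H = C H.leadingCoeff * prodRoots H.roots :=
    (IsAlgClosed.splits H).eq_prod_roots
  obtain ⟨t, ht⟩ : ∃ t, H.roots = b ::ₘ t := ⟨H.roots.erase b, (Multiset.cons_erase hb).symm⟩
  have hCne : C H.leadingCoeff ≠ 0 := by
    rw [ne_eq, Polynomial.C_eq_zero]
    exact leadingCoeff_ne_zero.mpr hH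
  conv_lhs => rw [hfac, ht, prodRoots_cons]
  conv_rhs => rw [hfac, ht, prodRoots_cons]
  rw [gaussAt_mul μ γ b hμ, μ.map_mul, gaussAt_mul μ γ b hμ, μ.map_mul, gaussAt_C]
  refine WithTop.add_lt_add_left (fun htop => hCne (hμ _ htop)) ?_
  have h1 : gaussAt μ γ b (X - C b) = ((γ : Γ) : WithTop Γ) := by
    rw [gaussAt_linear]
    simp [μ.map_zero]
  have h2 : gaussAt μ γ b (prodRoots t) ≤ μ (prodRoots t) :=
    gaussAt_prodRoots_le μ γ b hμ t fun a ha =>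
      hle a (by rw [ht]; exact Multiset.mem_cons_of_mem ha)
  obtain ⟨pv, hpv⟩ := WithTop.ne_top_iff_exists.mp
    (gaussAt_ne_top μ γ b hμ (prodRoots_ne_zero t))
  rw [h1, ← hpv]
  rw [← WithTop.coe_add]
  exact wt_add_lt_add hγβ (le_trans (le_of_eq hpv) h2)

end Gauss

section QExp
variable {K : Type*} [Field K]

lemma qCoeff_degree_lt (q : Polynomial K) (hq : q ≠ 0) :
    ∀ (i : ℕ) (p : Polynomial K), (qCoeff q i p).degree < q.degree := by
  intro i
  induction i with
  | zero => intro p; exact EuclideanDomain.mod_lt p hq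
  | succ n ih => intro p; exact ih (p / q)

lemma qCoeff_expansion (q : Polynomial K) (hq : 0 < q.natDegree) :
    ∀ (N : ℕ) (p : Polynomial K), p.degree < ((N * q.natDegree : ℕ) : WithBot ℕ) →
      p = ∑ i ∈ Finset.range N, qCoeff q i p * q ^ i := by
  have hq0 : q ≠ 0 := fun h => by simp [h] at hq
  intro N
  induction N with
  | zero =>
    intro p hp
    have hp0 : p = 0 := by
      by_contra h
      have := zero_le_degree_iff.mpr h
      rw [Nat.zero_mul] at hp
      exact absurd hp (not_lt.mpr (le_trans (by exact_mod_cast le_refl (0 : ℕ)) this))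
    rw [hp0, Finset.range_zero, Finset.sum_empty]
  | succ N ih =>
    intro p hp
    have h := EuclideanDomain.div_add_mod p q
    have key : p = p % q + p / q * q := by
      rw [add_comm, mul_comm]
      exact h.symm
    have hdiv : (p / q).degree < ((N * q.natDegree : ℕ) : WithBot ℕ) := by
      by_cases hzero : p / q = 0
      · rw [hzero, degree_zero]
        exact WithBot.bot_lt_coe _
      · have hd1 : (q * (p / q)).degree < (((N + 1) * q.natDegree : ℕ) : WithBot ℕ) := by
        -- q * (p / q) = p - p % q
          have heq : q * (p / q) = p - p % q := eq_sub_of_add_eq h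
          rw [heq]
          refine lt_of_le_of_lt (degree_sub_le p (p % q)) (max_lt hp ?_)
          have hmq : (p % q).degree < q.degree := EuclideanDomain.mod_lt p hq0
          refine lt_of_lt_of_le hmq ?_
          rw [degree_eq_natDegree hq0, Nat.cast_le]
          exact Nat.le_mul_of_pos_left _ (Nat.succ_pos N)
        have hqq : q * (p / q) ≠ 0 := mul_ne_zero hq0 hzero
        have h2 : (q * (p / q)).natDegree < (N + 1) * q.natDegree :=
          (natDegree_lt_iff_degree_lt hqq).mpr hd1
        rw [Polynomial.natDegree_mul hq0 hzero] at h2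
        have h3 : (p / q).natDegree < N * q.natDegree := by
          have hee : (N + 1) * q.natDegree = N * q.natDegree + q.natDegree := by ring
          omega
        exact (natDegree_lt_iff_degree_lt hzero).mp h3
    calc p = p % q + p / q * q := key
      _ = ∑ i ∈ Finset.range (N + 1), qCoeff q i p * q ^ i := by
        rw [Finset.sum_range_succ']
        have h0 : qCoeff q 0 p * q ^ 0 = p % q := by
          rw [pow_zero, mul_one]
          rfl
        have hsucc : ∀ i, qCoeff q (i + 1) p * q ^ (i + 1) = qCoeff q i (p / q) * q ^ i * q := by
          intro i
          rw [pow_succ, ← mul_assoc]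
          rfl
        rw [h0, Finset.sum_congr rfl fun i _ => hsucc i, ← Finset.sum_mul, ← ih (p / q) hdiv]
        rw [add_comm]

end QExp

section Cofinal
variable {K : Type*} [Field K] [Algebra K L] [IsAlgClosure K L]
variable [Module ℚ Γ] [PosSMulStrictMono ℚ Γ]
variable {ν : AddValuation (Polynomial K) (WithTop Γ)}
variable {μ : AddValuation (Polynomial L) (WithTop Γ)}

lemma gaussAt_pow_eq (γ : Γ) (b : L) (hμ : TrivialSupport μ) {H : Polynomial L}
    (hHQ : gaussAt μ γ b H = μ H) (i : ℕ) : gaussAt μ γ b (H ^ i) = μ (H ^ i) := by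
  induction i with
  | zero => rw [pow_zero, gaussAt_one, μ.map_one]
  | succ n ihp => rw [pow_succ, gaussAt_mul μ γ b hμ, μ.map_mul, ihp, hHQ]

lemma cofinal (hν : TrivialSupport ν) (hμ : TrivialSupport μ) (hext : IsExtension μ ν)
    (Λ : Set (Polynomial K)) (hkey : ∀ Q ∈ Λ, IsKeyPoly ν Q)
    (hcompl : ∀ f : Polynomial K, ∃ Q ∈ Λ, trunc ν Q f = ν f)
    (hnolast : ∀ Q ∈ Λ, ∃ Q' ∈ Λ, eps ν Q < eps ν Q')
    (b : L) : ∃ Q ∈ Λ, aval μ (X - C b) < delta μ Q := by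
  by_contra hcon
  push_neg at hcon
  haveI : IsAlgClosed L := IsAlgClosure.isAlgClosed K
  have hμβ : μ (X - C b) = ((aval μ (X - C b) : Γ) : WithTop Γ) :=
    aval_coe hμ (X_sub_C_ne_zero b)
  set β := aval μ (X - C b) with hβ
  have hint : IsIntegral K b := Algebra.IsIntegral.isIntegral b
  set g := minpoly K b with hg
  have hgmonic : g.Monic := minpoly.monic hint
  have hgne : g ≠ 0 := hgmonic.ne_zero
  obtain ⟨Q, hQΛ, hQtr⟩ := hcompl g
  obtain ⟨Q', hQ'Λ, hQlt⟩ := hnolast Q hQΛ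
  obtain ⟨Q'', hQ''Λ, hQlt2⟩ := hnolast Q' hQ'Λ
  obtain ⟨hQmonic, hQdeg, hQkey⟩ := hkey Q hQΛ
  obtain ⟨hQ'monic, hQ'deg, _⟩ := hkey Q' hQ'Λ
  obtain ⟨hQ''monic, hQ''deg, _⟩ := hkey Q'' hQ''Λ
  have hed : eps ν Q = delta μ Q := eps_eq_delta hν hμ hext Q hQdeg
  have hed' : eps ν Q' = delta μ Q' := eps_eq_delta hν hμ hext Q' hQ'deg
  have hed'' : eps ν Q'' = delta μ Q'' := eps_eq_delta hν hμ hext Q'' hQ''deg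
  set γ := delta μ Q' with hγ
  have hdlt : delta μ Q < γ := by
    rw [← hed, ← hed']
    exact hQlt
  have hγβ : γ < β := by
    refine lt_of_lt_of_le ?_ (hcon Q'' hQ''Λ)
    rw [← hed', ← hed'']
    exact hQlt2
  -- polynomials whose delta is < γ have gaussAt = μ on their image
  have hroots_eq : ∀ f : Polynomial K, 0 < f.natDegree → delta μ f < γ →
      gaussAt μ γ b (f.map (algebraMap K L)) = μ (f.map (algebraMap K L)) := by
    intro f hfd hfδ
    have hfne : f.map (algebraMap K L) ≠ 0 :=
      (Polynomial.map_ne_zero_iff (algebraMap K L).injective).mpr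
        (fun h => by simp [h] at hfd)
    refine gaussAt_eq_mu μ γ b hμ hfne ?_
    intro a ha
    obtain ⟨hub, -⟩ := delta_bound μ f hfd
    have hma : mA μ a ≤ delta μ f := hub a ha
    have h1 : μ (X - C a) < μ (X - C b) := by
      rw [mu_lin μ hμ, hμβ, WithTop.coe_lt_coe]
      exact lt_of_le_of_lt hma (lt_of_lt_of_le hfδ (le_of_lt hγβ))
    have h2 : μ (X - C a) < ((γ : Γ) : WithTop Γ) := by
      rw [mu_lin μ hμ, WithTop.coe_lt_coe]
      exact lt_of_le_of_lt hma hfδ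
    exact gaussAt_linear_eq μ γ b a h1 h2
  have hQmap : gaussAt μ γ b (Q.map (algebraMap K L)) = μ (Q.map (algebraMap K L)) :=
    hroots_eq Q hQdeg hdlt
  have hcoeffs : ∀ i : ℕ,
      gaussAt μ γ b ((qCoeff Q i g).map (algebraMap K L) * (Q.map (algebraMap K L)) ^ i)
        = ν (qCoeff Q i g * Q ^ i) := by
    intro i
    by_cases hzero : qCoeff Q i g = 0
    · rw [hzero, Polynomial.map_zero, zero_mul, gaussAt_zero, zero_mul, ν.map_zero]
    · have hcmap : gaussAt μ γ b ((qCoeff Q i g).map (algebraMap K L))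
          = μ ((qCoeff Q i g).map (algebraMap K L)) := by
        rcases Nat.eq_zero_or_pos (qCoeff Q i g).natDegree with hdeg0 | hdegpos
        · have hC := Polynomial.eq_C_of_natDegree_eq_zero hdeg0
          rw [hC, Polynomial.map_C, gaussAt_C]
        · have heps : eps ν (qCoeff Q i g) < eps ν Q := by
            by_contra hh
            push_neg at hh
            have hkq := hQkey _ hdegpos hh
            have hdd : (qCoeff Q i g).natDegree < Q.natDegree :=
              natDegree_lt_natDegree hzero
                (qCoeff_degree_lt Q (fun h => by simp [h] at hQdeg) i g)
            omega
          have hδc : delta μ (qCoeff Q i g) < γ := by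
            rw [← eps_eq_delta hν hμ hext _ hdegpos]
            calc eps ν (qCoeff Q i g) < eps ν Q := heps
              _ = delta μ Q := hed
              _ < γ := hdlt
          exact hroots_eq _ hdegpos hδc
      rw [gaussAt_mul μ γ b hμ, hcmap, gaussAt_pow_eq γ b hμ hQmap i, ← μ.map_mul,
        ← Polynomial.map_pow, ← Polynomial.map_mul, hext]
  set n := g.natDegree with hn
  have hexp : g = ∑ i ∈ Finset.range (n + 1), qCoeff Q i g * Q ^ i := by
    refine qCoeff_expansion Q hQdeg (n + 1) g ?_
    refine lt_of_le_of_lt degree_le_natDegree ?_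
    rw [Nat.cast_lt]
    exact Nat.lt_of_lt_of_le (Nat.lt_succ_self n) (Nat.le_mul_of_pos_right _ hQdeg)
  have hgmap : g.map (algebraMap K L)
      = ∑ i ∈ Finset.range (n + 1),
          (qCoeff Q i g).map (algebraMap K L) * (Q.map (algebraMap K L)) ^ i := by
    conv_lhs => rw [hexp]
    rw [Polynomial.map_sum]
    exact Finset.sum_congr rfl fun i _ => by rw [Polynomial.map_mul, Polynomial.map_pow]
  have hwge : ν g ≤ gaussAt μ γ b (g.map (algebraMap K L)) := by
    rw [hgmap]
    refine le_gaussAt_sum μ γ b ?_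
    intro i hi
    rw [hcoeffs i, ← hQtr]
    exact Finset.inf_le hi
  have hmapne : g.map (algebraMap K L) ≠ 0 :=
    (Polynomial.map_ne_zero_iff (algebraMap K L).injective).mpr hgne
  have hbroot : b ∈ (g.map (algebraMap K L)).roots := by
    rw [Polynomial.mem_roots']
    refine ⟨hmapne, ?_⟩
    rw [IsRoot, Polynomial.eval_map, ← Polynomial.aeval_def]
    exact minpoly.aeval K b
  have hstrict : gaussAt μ γ b (g.map (algebraMap K L)) < μ (g.map (algebraMap K L)) := by
    refine gaussAt_lt_mu μ γ b hμ hmapne hbroot ?_ ?_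
    · rw [hμβ]
      exact WithTop.coe_lt_coe.mpr hγβ
    · intro a ha
      refine gaussAt_linear_le μ γ b a ?_
      rw [hμβ]
      exact WithTop.coe_le_coe.mpr (le_of_lt hγβ)
  rw [hext g] at hstrict
  exact absurd (lt_of_le_of_lt hwge hstrict) (lt_irrefl _)

end Cofinal

lemma mu_multiset_prod (μ : AddValuation (Polynomial L) (WithTop Γ)) :
    ∀ t : Multiset (Polynomial L), μ t.prod = (t.map fun p => μ p).sum := by
  intro t
  induction t using Multiset.induction with
  | empty => simp [μ.map_one]
  | cons p t ih => rw [Multiset.prod_cons, μ.map_mul, ih, Multiset.map_cons, Multiset.sum_cons]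

lemma mu_C_prod (μ : AddValuation (Polynomial L) (WithTop Γ)) (v : L) :
    ∀ t : Multiset L, (∀ c ∈ t, μ (C (v - c)) = ((mA μ c : Γ) : WithTop Γ)) →
      μ (C ((t.map fun c => v - c).prod)) = (((t.map (mA μ)).sum : Γ) : WithTop Γ) := by
  intro t
  induction t using Multiset.induction with
  | empty =>
    intro _
    simp [μ.map_one]
  | cons c t ih =>
    intro h
    rw [Multiset.map_cons, Multiset.prod_cons, Polynomial.C_mul, μ.map_mul,
      h c (Multiset.mem_cons_self c t), ih fun x hx => h x (Multiset.mem_cons_of_mem hx),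
      Multiset.map_cons, Multiset.sum_cons, WithTop.coe_add]

lemma coe_msum : ∀ t : Multiset Γ,
    (t.map fun x : Γ => ((x : Γ) : WithTop Γ)).sum = ((t.sum : Γ) : WithTop Γ) := by
  intro t
  induction t using Multiset.induction with
  | empty => simp
  | cons x t ih => rw [Multiset.map_cons, Multiset.sum_cons, ih, Multiset.sum_cons,
      WithTop.coe_add]

end KP
end KPAux

/-- Let `Λ` be a complete sequence of key polynomials for `ν` without last
element and, for each `Q ∈ Λ`, let `a Q` be a root of `Q` with `μ(x - a Q) = δ(Q)`. Then
`{a Q}_{Q ∈ Λ}` (ordered by `ε`) is a pseudo-convergent sequence for `μ` of transcendental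
type, without a limit in `K̄`, and `x` is a limit of it. -/
theorem keyPoly_roots_pseudoConvergent {K : Type*} [Field K] {Γ : Type*}
    [AddCommGroup Γ] [LinearOrder Γ] [IsOrderedAddMonoid Γ] [Module ℚ Γ] [PosSMulStrictMono ℚ Γ]
    {L : Type*} [Field L] [Algebra K L] [IsAlgClosure K L]
    (ν : AddValuation (Polynomial K) (WithTop Γ)) (μ : AddValuation (Polynomial L) (WithTop Γ))
    (hν : TrivialSupport ν) (hμ : TrivialSupport μ) (hext : IsExtension μ ν)
    (Λ : Set (Polynomial K))
    (hkey : ∀ Q ∈ Λ, IsKeyPoly ν Q)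
    (hdist : ∀ Q ∈ Λ, ∀ Q' ∈ Λ, eps ν Q = eps ν Q' → Q = Q')
    (hwo : Λ.WellFoundedOn fun Q Q' => eps ν Q < eps ν Q')
    (hcompl : ∀ f : Polynomial K, ∃ Q ∈ Λ, trunc ν Q f = ν f)
    (hnolast : ∀ Q ∈ Λ, ∃ Q' ∈ Λ, eps ν Q < eps ν Q')
    (a : Polynomial K → L)
    (hroot : ∀ Q ∈ Λ, Polynomial.aeval (a Q) Q = 0)
    (hmax : ∀ Q ∈ Λ, μ (X - C (a Q)) = ((delta μ Q : Γ) : WithTop Γ)) :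
    -- `{a Q}` is a pseudo-convergent sequence for `μ`
    (∀ Q₁ ∈ Λ, ∀ Q₂ ∈ Λ, ∀ Q₃ ∈ Λ, eps ν Q₁ < eps ν Q₂ → eps ν Q₂ < eps ν Q₃ →
        μ (C (a Q₂) - C (a Q₁)) < μ (C (a Q₃) - C (a Q₂))) ∧
    -- `x` is a limit of `{a Q}`
    (∀ Q ∈ Λ, ∀ Q' ∈ Λ, eps ν Q < eps ν Q' →
        μ (X - C (a Q)) = μ (C (a Q') - C (a Q))) ∧
    -- `{a Q}` is of transcendental type: the value of every polynomial is eventually fixed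
    (∀ f : Polynomial L, ∃ Q ∈ Λ, ∀ Q' ∈ Λ, eps ν Q ≤ eps ν Q' →
        μ (C (Polynomial.eval (a Q') f)) = μ (C (Polynomial.eval (a Q) f))) ∧
    -- `{a Q}` has no limit in `L`
    ¬ ∃ b : L, ∀ Q ∈ Λ, ∀ Q' ∈ Λ, eps ν Q < eps ν Q' →
        μ (C b - C (a Q)) = μ (C (a Q') - C (a Q)) := by
  classical
  haveI : IsAlgClosed L := IsAlgClosure.isAlgClosed K
  have hdeg : ∀ Q ∈ Λ, 0 < Q.natDegree := fun Q hQ => (hkey Q hQ).2.1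
  have hed : ∀ Q ∈ Λ, eps ν Q = delta μ Q := fun Q hQ =>
    KP.eps_eq_delta hν hμ hext Q (hdeg Q hQ)
  have hdiff : ∀ Q ∈ Λ, ∀ Q' ∈ Λ, eps ν Q < eps ν Q' →
      μ (C (a Q') - C (a Q)) = ((delta μ Q : Γ) : WithTop Γ) := by
    intro Q hQ Q' hQ' hlt
    have hδ : delta μ Q < delta μ Q' := by
      rw [← hed Q hQ, ← hed Q' hQ']
      exact hlt
    have hlt2 : μ (X - C (a Q)) < μ (X - C (a Q')) := by
      rw [hmax Q hQ, hmax Q' hQ']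
      exact WithTop.coe_lt_coe.mpr hδ
    have heq : C (a Q') - C (a Q) = (X - C (a Q)) - (X - C (a Q')) := by ring
    rw [heq, AddValuation.map_sub_eq_of_lt_left _ hlt2, hmax Q hQ]
  refine ⟨?_, ?_, ?_, ?_⟩
  · -- pseudo-convergent
    intro Q₁ hQ₁ Q₂ hQ₂ Q₃ hQ₃ h12 h23
    rw [hdiff Q₁ hQ₁ Q₂ hQ₂ h12, hdiff Q₂ hQ₂ Q₃ hQ₃ h23, WithTop.coe_lt_coe,
      ← hed Q₁ hQ₁, ← hed Q₂ hQ₂]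
    exact h12
  · -- x is a limit
    intro Q hQ Q' hQ' hlt
    rw [hmax Q hQ, hdiff Q hQ Q' hQ' hlt]
  · -- transcendental type
    intro f
    obtain ⟨Q₀, hQ₀Λ, -⟩ := hcompl 1
    by_cases hf : f = 0
    · exact ⟨Q₀, hQ₀Λ, fun Q' _ _ => by rw [hf]; simp⟩
    have hdom : ∀ T : Finset L, ∃ Q ∈ Λ, ∀ c ∈ T, aval μ (X - C c) < delta μ Q := by
      intro T
      induction T using Finset.induction with
      | empty => exact ⟨Q₀, hQ₀Λ, fun c hc => absurd hc (Finset.notMem_empty c)⟩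
      | @insert c T hcT ih =>
        obtain ⟨Q₁, hQ₁, hQ₁h⟩ := ih
        obtain ⟨Q₂, hQ₂, hQ₂h⟩ := KP.cofinal hν hμ hext Λ hkey hcompl hnolast c
        rcases le_total (eps ν Q₁) (eps ν Q₂) with hle | hle
        · refine ⟨Q₂, hQ₂, ?_⟩
          intro x hx
          rcases Finset.mem_insert.mp hx with rfl | hx
          · exact hQ₂h
          · refine lt_of_lt_of_le (hQ₁h x hx) ?_
            rw [← hed Q₁ hQ₁, ← hed Q₂ hQ₂]
            exact hle
        · refine ⟨Q₁, hQ₁, ?_⟩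
          intro x hx
          rcases Finset.mem_insert.mp hx with rfl | hx
          · refine lt_of_lt_of_le hQ₂h ?_
            rw [← hed Q₁ hQ₁, ← hed Q₂ hQ₂]
            exact hle
          · exact hQ₁h x hx
    obtain ⟨Qs, hQsΛ, hQs⟩ := hdom f.roots.toFinset
    have hval : ∀ R ∈ Λ, eps ν Qs ≤ eps ν R →
        μ (C (Polynomial.eval (a R) f))
          = μ (C f.leadingCoeff) + (((f.roots.map (KP.mA μ)).sum : Γ) : WithTop Γ) := by
      intro R hR hleR
      have hfac : f = C f.leadingCoeff * KP.prodRoots f.roots :=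
        (IsAlgClosed.splits f).eq_prod_roots
      have heval : Polynomial.eval (a R) f
          = f.leadingCoeff * (f.roots.map fun c => a R - c).prod := by
        conv_lhs => rw [hfac]
        rw [eval_mul, eval_C, KP.prodRoots, eval_multiset_prod, Multiset.map_map]
        congr 2
        refine Multiset.map_congr rfl fun c _ => ?_
        simp
      have hterm : ∀ c ∈ f.roots, μ (C (a R - c)) = ((KP.mA μ c : Γ) : WithTop Γ) := by
        intro c hc
        have hltc : μ (X - C c) < μ (X - C (a R)) := by
          rw [KP.mu_lin μ hμ, hmax R hR, WithTop.coe_lt_coe]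
          calc KP.mA μ c < delta μ Qs := hQs c (Multiset.mem_toFinset.mpr hc)
            _ ≤ delta μ R := by rw [← hed Qs hQsΛ, ← hed R hR]; exact hleR
        have heq2 : C (a R - c) = (X - C c) - (X - C (a R)) := by
          rw [Polynomial.C_sub]
          ring
        rw [heq2, AddValuation.map_sub_eq_of_lt_left _ hltc, KP.mu_lin μ hμ]
      rw [heval, Polynomial.C_mul, μ.map_mul]
      congr 1
      exact KP.mu_C_prod μ (a R) f.roots hterm
    refine ⟨Qs, hQsΛ, ?_⟩
    intro Q' hQ' hle
    rw [hval Q' hQ' hle, hval Qs hQsΛ (le_refl _)]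
  · -- no limit in L
    rintro ⟨b, hb⟩
    obtain ⟨Qb, hQbΛ, hQb⟩ := KP.cofinal hν hμ hext Λ hkey hcompl hnolast b
    obtain ⟨Q', hQ'Λ, hlt⟩ := hnolast Qb hQbΛ
    have h1 : μ (C b - C (a Qb)) = ((delta μ Qb : Γ) : WithTop Γ) := by
      rw [hb Qb hQbΛ Q' hQ'Λ hlt]
      exact hdiff Qb hQbΛ Q' hQ'Λ hlt
    have h2 : ((delta μ Qb : Γ) : WithTop Γ) ≤ μ (X - C b) := by
      have heq : (X - C b : Polynomial L) = (X - C (a Qb)) - (C b - C (a Qb)) := by ring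
      rw [heq]
      refine μ.map_le_sub ?_ ?_
      · rw [hmax Qb hQbΛ]
      · rw [h1]
    rw [KP.aval_coe hμ (X_sub_C_ne_zero b), WithTop.coe_le_coe] at h2
    exact absurd (lt_of_le_of_lt h2 hQb) (lt_irrefl _)
end

section
/- Let K be a field, ν a valuation on K[x] with trivial support, K̄ an algebraic closure of K, and μ an extension of ν to K̄[x]. Let Q, Q' be key polynomials for ν with ε(Q) < ε(Q'), and let a_Q, a_{Q'} ∈ K̄ be roots of Q, Q' respectively with μ(x−a_Q) = δ(Q) and μ(x−a_{Q'}) = δ(Q'). Then μ(a_{Q'} − a_Q) = min{μ(x−a_{Q'}), μ(x−a_Q)} = μ(x−a_Q) = ε(Q). -/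
open Polynomial

theorem myHD_eq_zero {R : Type*} [Semiring R] (p : R[X]) (r : ℕ) (h : p.natDegree < r) :
    p.hasseDeriv r = 0 := by
  ext n
  rw [hasseDeriv_coeff, coeff_zero, coeff_eq_zero_of_natDegree_lt (by omega), mul_zero]

theorem myHD_linear_mul {L : Type*} [Field L] (a : L) (p : L[X]) (r : ℕ) :
    hasseDeriv (r + 1) ((X - C a) * p) =
      (X - C a) * hasseDeriv (r + 1) p + hasseDeriv r p := by
  rw [hasseDeriv_mul, Finset.Nat.antidiagonal_succ, Finset.sum_cons, Finset.sum_map,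
    hasseDeriv_zero']
  congr 1
  rw [Finset.sum_eq_single (0, r)]
  · simp [hasseDeriv_one']
  · rintro ⟨i, j⟩ hij hne
    rcases i with _ | i
    · simp only [Finset.HasAntidiagonal.mem_antidiagonal, zero_add] at hij
      exact absurd (by rw [hij]) hne
    · have : ((X : L[X]) - C a).natDegree < i + 1 + 1 := by
        simp [natDegree_X_sub_C]
      simp [Function.Embedding.coe_prodMap, myHD_eq_zero _ _ this]
  · intro h
    exact absurd (by simp : ((0:ℕ), r) ∈ Finset.HasAntidiagonal.antidiagonal r) h

section Aux2
variable {Γ : Type*} [AddCommGroup Γ] [LinearOrder Γ] [IsOrderedAddMonoid Γ] {L : Type*} [Field L]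
variable (μ : AddValuation (Polynomial L) (WithTop Γ))

theorem myval_prod_eq (s : Multiset L) (δ : Γ)
    (h : ∀ a ∈ s, μ (X - C a) = (δ : WithTop Γ)) :
    μ ((s.map fun a => X - C a).prod) = ((Multiset.card s • δ : Γ) : WithTop Γ) := by
  induction s using Multiset.induction with
  | empty => simp
  | cons a t ih =>
      rw [Multiset.map_cons, Multiset.prod_cons, μ.map_mul, h a (Multiset.mem_cons_self a t),
        ih (fun b hb => h b (Multiset.mem_cons_of_mem hb)), Multiset.card_cons, succ_nsmul,
        ← WithTop.coe_add, add_comm]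

theorem myval_hd_le (s : Multiset L) (δ : Γ)
    (h : ∀ a ∈ s, μ (X - C a) ≤ (δ : WithTop Γ)) (r : ℕ) :
    μ ((s.map fun a => X - C a).prod) ≤
      μ (hasseDeriv r ((s.map fun a => X - C a).prod)) + ((r • δ : Γ) : WithTop Γ) := by
  induction s using Multiset.induction generalizing r with
  | empty =>
      cases r with
      | zero => simp [hasseDeriv_zero']
      | succ k =>
          have h1 : ((0 : Multiset L).map fun a => X - C a).prod = 1 := by simp
          rw [h1, myHD_eq_zero _ _ (by simp), μ.map_zero]
          simp
  | cons a t ih =>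
      have hmem : ∀ b ∈ t, μ (X - C b) ≤ (δ : WithTop Γ) :=
        fun b hb => h b (Multiset.mem_cons_of_mem hb)
      cases r with
      | zero => simp [hasseDeriv_zero']
      | succ k =>
          rw [Multiset.map_cons, Multiset.prod_cons, myHD_linear_mul, μ.map_mul]
          set P := (t.map fun b => X - C b).prod with hP
          have hA : μ (X - C a) + μ P ≤
              μ ((X - C a) * hasseDeriv (k+1) P) + (((k+1) • δ : Γ) : WithTop Γ) := by
            rw [μ.map_mul, add_assoc]
            exact add_le_add_right (ih hmem (k+1)) _
          have hB : μ (X - C a) + μ P ≤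
              μ (hasseDeriv k P) + (((k+1) • δ : Γ) : WithTop Γ) := by
            calc μ (X - C a) + μ P ≤ (δ : WithTop Γ) + (μ (hasseDeriv k P) + ((k • δ : Γ))) :=
                  add_le_add (h a (Multiset.mem_cons_self a t)) (ih hmem k)
              _ = μ (hasseDeriv k P) + (((k+1) • δ : Γ) : WithTop Γ) := by
                  rw [succ_nsmul, WithTop.coe_add]; abel
          calc μ (X - C a) + μ P
              ≤ min (μ ((X - C a) * hasseDeriv (k+1) P) + (((k+1) • δ : Γ) : WithTop Γ))
                (μ (hasseDeriv k P) + (((k+1) • δ : Γ) : WithTop Γ)) := le_min hA hB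
            _ = min (μ ((X - C a) * hasseDeriv (k+1) P)) (μ (hasseDeriv k P))
                + (((k+1) • δ : Γ) : WithTop Γ) := min_add_add_right _ _ _
            _ ≤ μ ((X - C a) * hasseDeriv (k+1) P + hasseDeriv k P)
                + (((k+1) • δ : Γ) : WithTop Γ) := add_le_add_left (μ.map_add _ _) _

theorem myval_hd_lt (hμ : TrivialSupport μ) (s : Multiset L) (δ : Γ)
    (h : ∀ a ∈ s, μ (X - C a) < (δ : WithTop Γ)) (r : ℕ) (hr : 1 ≤ r) :
    μ ((s.map fun a => X - C a).prod) <
      μ (hasseDeriv r ((s.map fun a => X - C a).prod)) + ((r • δ : Γ) : WithTop Γ) := by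
  induction s using Multiset.induction generalizing r with
  | empty =>
      have h1 : ((0 : Multiset L).map fun a => X - C a).prod = 1 := by simp
      rw [h1, myHD_eq_zero _ _ (by simp; omega), μ.map_zero, μ.map_one, top_add]
      simpa using WithTop.coe_lt_top (0 : Γ)
  | cons a t ih =>
      have hmem : ∀ b ∈ t, μ (X - C b) < (δ : WithTop Γ) :=
        fun b hb => h b (Multiset.mem_cons_of_mem hb)
      have hva : μ (X - C a) ≠ ⊤ := (h a (Multiset.mem_cons_self a t)).ne_top
      obtain ⟨k, rfl⟩ : ∃ k, r = k + 1 := ⟨r - 1, by omega⟩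
      rw [Multiset.map_cons, Multiset.prod_cons, myHD_linear_mul, μ.map_mul]
      set P := (t.map fun b => X - C b).prod with hP
      have hMon : P.Monic := monic_multiset_prod_of_monic _ _ fun b _ => monic_X_sub_C b
      have hPne : μ P ≠ ⊤ := fun htop => hMon.ne_zero (hμ P htop)
      have hA : μ (X - C a) + μ P <
          μ ((X - C a) * hasseDeriv (k+1) P) + (((k+1) • δ : Γ) : WithTop Γ) := by
        rw [μ.map_mul, add_assoc]
        exact WithTop.add_lt_add_left hva (ih hmem (k+1) (by omega))
      have hB : μ (X - C a) + μ P <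
          μ (hasseDeriv k P) + (((k+1) • δ : Γ) : WithTop Γ) := by
        rcases Nat.eq_zero_or_pos k with hk | hk
        · subst hk
          rw [hasseDeriv_zero', one_nsmul]
          calc μ (X - C a) + μ P < (δ : WithTop Γ) + μ P :=
                WithTop.add_lt_add_right hPne (h a (Multiset.mem_cons_self a t))
            _ = μ P + (δ : WithTop Γ) := add_comm _ _
        · calc μ (X - C a) + μ P < μ (X - C a) + (μ (hasseDeriv k P) + ((k • δ : Γ))) :=
                WithTop.add_lt_add_left hva (ih hmem k hk)
            _ ≤ (δ : WithTop Γ) + (μ (hasseDeriv k P) + ((k • δ : Γ))) :=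
                add_le_add_left (h a (Multiset.mem_cons_self a t)).le _
            _ = μ (hasseDeriv k P) + (((k+1) • δ : Γ) : WithTop Γ) := by
                rw [succ_nsmul, WithTop.coe_add]; abel
      calc μ (X - C a) + μ P
          < min (μ ((X - C a) * hasseDeriv (k+1) P) + (((k+1) • δ : Γ) : WithTop Γ))
            (μ (hasseDeriv k P) + (((k+1) • δ : Γ) : WithTop Γ)) := lt_min hA hB
        _ = min (μ ((X - C a) * hasseDeriv (k+1) P)) (μ (hasseDeriv k P))
            + (((k+1) • δ : Γ) : WithTop Γ) := min_add_add_right _ _ _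
        _ ≤ μ ((X - C a) * hasseDeriv (k+1) P + hasseDeriv k P)
            + (((k+1) • δ : Γ) : WithTop Γ) := add_le_add_left (μ.map_add _ _) _

end Aux2



section Aux3
variable {K : Type*} [Field K] {Γ : Type*} [AddCommGroup Γ] [LinearOrder Γ] [IsOrderedAddMonoid Γ] {L : Type*} [Field L]

theorem myHD_map (φ : K →+* L) (r : ℕ) (p : K[X]) :
    (p.map φ).hasseDeriv r = (p.hasseDeriv r).map φ := by
  ext n
  simp [hasseDeriv_coeff, coeff_map]

theorem myHD_card (s : Multiset L) :
    hasseDeriv (Multiset.card s) ((s.map fun a => X - C a).prod) = 1 := by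
  induction s using Multiset.induction with
  | empty => simp [hasseDeriv_zero']
  | cons a t ih =>
      rw [Multiset.map_cons, Multiset.prod_cons, Multiset.card_cons, myHD_linear_mul, ih]
      have : ((t.map fun a => X - C a).prod).natDegree < Multiset.card t + 1 := by
        rw [natDegree_multiset_prod_X_sub_C_eq_card]; omega
      rw [myHD_eq_zero _ _ this, mul_zero, zero_add]

theorem my_aval_eq_of {μ : AddValuation (Polynomial L) (WithTop Γ)} {p : Polynomial L} {x : Γ}
    (h : μ p = (x : WithTop Γ)) : aval μ p = x := by
  simp [aval, h]

theorem my_coe_aval {μ : AddValuation (Polynomial L) (WithTop Γ)}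
    (hμ : TrivialSupport μ) {p : Polynomial L} (hp : p ≠ 0) :
    μ p = ((aval μ p : Γ) : WithTop Γ) := by
  cases h : μ p with
  | top => exact absurd (hμ p h) hp
  | coe x => simp [aval, h]

variable (μ : AddValuation (Polynomial L) (WithTop Γ))

theorem myval_hd_eq (hμ : TrivialSupport μ) (s₁ s₂ : Multiset L) (δ : Γ)
    (h1 : ∀ a ∈ s₁, μ (X - C a) = (δ : WithTop Γ))
    (h2 : ∀ a ∈ s₂, μ (X - C a) < (δ : WithTop Γ)) :
    μ (hasseDeriv (Multiset.card s₁) (((s₁ + s₂).map fun a => X - C a).prod)) =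
      μ ((s₂.map fun a => X - C a).prod) := by
  set r₀ := Multiset.card s₁ with hr₀
  set P₁ := (s₁.map fun a => X - C a).prod with hP₁def
  set P₂ := (s₂.map fun a => X - C a).prod with hP₂def
  have hsplit : ((s₁ + s₂).map fun a => X - C a).prod = P₁ * P₂ := by
    rw [Multiset.map_add, Multiset.prod_add]
  have hP2Mon : P₂.Monic := monic_multiset_prod_of_monic _ _ fun b _ => monic_X_sub_C b
  have hP2ne : μ P₂ ≠ ⊤ := fun htop => hP2Mon.ne_zero (hμ P₂ htop)
  have hP1 : μ P₁ = ((r₀ • δ : Γ) : WithTop Γ) := myval_prod_eq μ s₁ δ h1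
  have hmem : ((r₀, 0) : ℕ × ℕ) ∈ Finset.HasAntidiagonal.antidiagonal r₀ := by simp
  rw [hsplit, hasseDeriv_mul, ← Finset.add_sum_erase _ _ hmem]
  have hterm : hasseDeriv r₀ P₁ * hasseDeriv 0 P₂ = P₂ := by
    rw [hP₁def, hr₀, myHD_card, hasseDeriv_zero', one_mul]
  rw [hterm]
  have hrest : ∀ ij ∈ (Finset.HasAntidiagonal.antidiagonal r₀).erase (r₀, 0),
      μ P₂ < μ (hasseDeriv ij.1 P₁ * hasseDeriv ij.2 P₂) := by
    rintro ⟨i, j⟩ hij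
    obtain ⟨hne, hsum⟩ := Finset.mem_erase.mp hij
    rw [Finset.HasAntidiagonal.mem_antidiagonal] at hsum
    have hj : 1 ≤ j := by
      rcases Nat.eq_zero_or_pos j with hj0 | hj0
      · exact absurd (by simp [hj0, ← hsum] : ((i : ℕ), j) = ((r₀ : ℕ), 0)) hne
      · exact hj0
    rw [μ.map_mul]
    have h1' : μ P₁ ≤ μ (hasseDeriv i P₁) + ((i • δ : Γ) : WithTop Γ) :=
      myval_hd_le μ s₁ δ (fun a ha => (h1 a ha).le) i
    have h2' : μ P₂ < μ (hasseDeriv j P₂) + ((j • δ : Γ) : WithTop Γ) :=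
      myval_hd_lt μ hμ s₂ δ h2 j hj
    have hji : (j • δ + i • δ : Γ) = r₀ • δ := by
      rw [← add_nsmul]; congr 1; omega
    have key : μ P₂ + ((i • δ : Γ) : WithTop Γ) <
        (μ (hasseDeriv i P₁) + μ (hasseDeriv j P₂)) + ((i • δ : Γ) : WithTop Γ) := by
      calc μ P₂ + ((i • δ : Γ) : WithTop Γ)
          < (μ (hasseDeriv j P₂) + ((j • δ : Γ) : WithTop Γ)) + ((i • δ : Γ) : WithTop Γ) :=
            WithTop.add_lt_add_right WithTop.coe_ne_top h2'
        _ = μ (hasseDeriv j P₂) + ((r₀ • δ : Γ) : WithTop Γ) := by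
            rw [add_assoc, ← WithTop.coe_add, hji]
        _ = μ (hasseDeriv j P₂) + μ P₁ := by rw [hP1]
        _ ≤ μ (hasseDeriv j P₂) + (μ (hasseDeriv i P₁) + ((i • δ : Γ) : WithTop Γ)) :=
            add_le_add_right h1' _
        _ = (μ (hasseDeriv i P₁) + μ (hasseDeriv j P₂)) + ((i • δ : Γ) : WithTop Γ) := by
            rw [← add_assoc, add_comm (μ (hasseDeriv j P₂)) (μ (hasseDeriv i P₁))]
    exact (WithTop.add_lt_add_iff_right WithTop.coe_ne_top).mp key
  have hrest' : μ P₂ < μ (∑ ij ∈ (Finset.HasAntidiagonal.antidiagonal r₀).erase (r₀, 0),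
      hasseDeriv ij.1 P₁ * hasseDeriv ij.2 P₂) :=
    μ.map_sum_lt hP2ne hrest
  exact μ.map_add_eq_of_lt_left hrest'

end Aux3

section Aux4
variable {K : Type*} [Field K] {Γ : Type*} [AddCommGroup Γ] [LinearOrder Γ] [IsOrderedAddMonoid Γ]
  [Module ℚ Γ] [PosSMulStrictMono ℚ Γ] [PosSMulReflectLT ℚ Γ]
  {L : Type*} [Field L] [Algebra K L] [IsAlgClosure K L]

theorem my_eps_eq_delta (ν : AddValuation (Polynomial K) (WithTop Γ))
    (μ : AddValuation (Polynomial L) (WithTop Γ))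
    (hν : TrivialSupport ν) (hμ : TrivialSupport μ) (hext : IsExtension μ ν)
    (f : Polynomial K) (hf : f.Monic) (hdeg : 0 < f.natDegree) :
    eps ν f = delta μ f := by
  letI := Classical.decEq L
  letI := Classical.decPred fun a : L => aval μ (X - C a) = delta μ f
  haveI : IsAlgClosed L := IsAlgClosure.isAlgClosed K
  set fb := f.map (algebraMap K L) with hfbdef
  have hfbm : fb.Monic := hf.map _
  have hsp : fb.Splits := IsAlgClosed.splits fb
  set s := fb.roots with hsdef
  have hprod : fb = (s.map fun a => X - C a).prod := hsp.eq_prod_roots_of_monic hfbm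
  have hndeg : fb.natDegree = f.natDegree := natDegree_map (algebraMap K L)
  have hcard : Multiset.card s = f.natDegree := by
    rw [← hndeg]; exact splits_iff_card_roots.mp hsp
  have hsne : s ≠ 0 := by
    intro h0; rw [h0] at hcard; simp at hcard; omega
  have hTne : s.toFinset.Nonempty := Multiset.toFinset_nonempty.mpr hsne
  set δ := delta μ f with hδdef
  have hδ : δ = s.toFinset.sup' hTne fun a => aval μ (X - C a) := by
    rw [hδdef, delta, dif_pos]
  have hcoe : ∀ a ∈ s, μ (X - C a) = ((aval μ (X - C a) : Γ) : WithTop Γ) :=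
    fun a _ => my_coe_aval hμ (X_sub_C_ne_zero a)
  have hle : ∀ a ∈ s, μ (X - C a) ≤ ((δ : Γ) : WithTop Γ) := by
    intro a ha
    rw [hcoe a ha, hδ]
    exact_mod_cast Finset.le_sup' (fun a => aval μ (X - C a)) (Multiset.mem_toFinset.mpr ha)
  set s₁ := s.filter (fun a => aval μ (X - C a) = δ) with hs₁
  set s₂ := s.filter (fun a => ¬ aval μ (X - C a) = δ) with hs₂
  have hsplit : s₁ + s₂ = s := Multiset.filter_add_not _ s
  have h1 : ∀ a ∈ s₁, μ (X - C a) = ((δ : Γ) : WithTop Γ) := by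
    intro a ha
    obtain ⟨has, hav⟩ := Multiset.mem_filter.mp ha
    rw [hcoe a has, hav]
  have h2 : ∀ a ∈ s₂, μ (X - C a) < ((δ : Γ) : WithTop Γ) := by
    intro a ha
    obtain ⟨has, hav⟩ := Multiset.mem_filter.mp ha
    rw [hcoe a has]
    have := hle a has
    rw [hcoe a has] at this
    exact lt_of_le_of_ne this (by exact_mod_cast hav)
  set r₀ := Multiset.card s₁ with hr₀def
  have hr₀pos : 0 < r₀ := by
    obtain ⟨b, hbT, hbv⟩ := s.toFinset.exists_mem_eq_sup' hTne fun a => aval μ (X - C a)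
    refine Multiset.card_pos_iff_exists_mem.mpr ⟨b, ?_⟩
    exact Multiset.mem_filter.mpr ⟨Multiset.mem_toFinset.mp hbT, by rw [hδ, hbv]⟩
  have hr₀le : r₀ ≤ f.natDegree := by
    rw [← hcard, ← hsplit, Multiset.card_add]
    exact Nat.le_add_right _ _
  set P₂ := (s₂.map fun a => X - C a).prod with hP₂def
  have hP₂ne : P₂ ≠ 0 :=
    (monic_multiset_prod_of_monic _ _ fun b _ => monic_X_sub_C b).ne_zero
  have hP₂top : μ P₂ ≠ ⊤ := fun h => hP₂ne (hμ _ h)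
  have heq : μ (hasseDeriv r₀ fb) = μ P₂ := by
    rw [hprod, ← hsplit]
    exact myval_hd_eq μ hμ s₁ s₂ δ h1 h2
  have hνf : ν f = μ fb := (hext f).symm
  have hνhd : ∀ r, ν (f.hasseDeriv r) = μ (hasseDeriv r fb) := by
    intro r
    rw [hfbdef, myHD_map, hext]
  have hfb_val : μ fb = ((r₀ • δ + aval μ P₂ : Γ) : WithTop Γ) := by
    rw [hprod, ← hsplit, Multiset.map_add, Multiset.prod_add, μ.map_mul,
      myval_prod_eq μ s₁ δ h1, ← hP₂def, my_coe_aval hμ hP₂ne, WithTop.coe_add]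
  have hd0 : f.hasseDeriv r₀ ≠ 0 := by
    intro h0
    apply hP₂top
    rw [← heq, hfbdef, myHD_map, h0, Polynomial.map_zero, μ.map_zero]
  have hmem : r₀ ∈ epsSupport f := by
    simp only [epsSupport, Finset.mem_filter, Finset.mem_Icc]
    exact ⟨⟨hr₀pos, hr₀le⟩, hd0⟩
  have havF : aval ν f = r₀ • δ + aval μ P₂ := my_aval_eq_of (by rw [hνf, hfb_val])
  have havH : aval ν (f.hasseDeriv r₀) = aval μ P₂ :=
    my_aval_eq_of (by rw [hνhd, heq, my_coe_aval hμ hP₂ne])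
  have hterm : ((r₀ : ℚ)⁻¹) • (aval ν f - aval ν (f.hasseDeriv r₀)) = δ := by
    rw [havF, havH, add_sub_cancel_right, ← Nat.cast_smul_eq_nsmul ℚ, smul_smul,
      inv_mul_cancel₀ (by exact_mod_cast hr₀pos.ne' : (r₀ : ℚ) ≠ 0), one_smul]
  have hub : ∀ r ∈ epsSupport f,
      ((r : ℚ)⁻¹) • (aval ν f - aval ν (f.hasseDeriv r)) ≤ δ := by
    intro r hr
    simp only [epsSupport, Finset.mem_filter, Finset.mem_Icc] at hr
    obtain ⟨⟨hr1, hrn⟩, hrd⟩ := hr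
    have hineq : μ fb ≤ μ (hasseDeriv r fb) + ((r • δ : Γ) : WithTop Γ) := by
      nth_rewrite 1 [hprod]
      rw [hprod]
      exact myval_hd_le μ s δ hle r
    rw [hext f, ← hνhd r, my_coe_aval hν hf.ne_zero, my_coe_aval hν hrd,
      ← WithTop.coe_add, WithTop.coe_le_coe] at hineq
    have h3 : aval ν f - aval ν (f.hasseDeriv r) ≤ (r : ℚ) • δ := by
      rw [Nat.cast_smul_eq_nsmul]
      exact sub_le_iff_le_add.mpr (by rw [add_comm]; exact hineq)
    calc ((r : ℚ)⁻¹) • (aval ν f - aval ν (f.hasseDeriv r))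
        ≤ ((r : ℚ)⁻¹) • ((r : ℚ) • δ) :=
          smul_le_smul_of_nonneg_left h3 (by positivity)
      _ = δ := by
          rw [smul_smul, inv_mul_cancel₀ (by exact_mod_cast hr1.trans_lt' Nat.zero_lt_one |>.ne' : (r : ℚ) ≠ 0), one_smul]
  have hne : (epsSupport f).Nonempty := ⟨r₀, hmem⟩
  rw [eps, dif_pos hne]
  apply le_antisymm
  · exact Finset.sup'_le _ _ hub
  · exact hterm ▸ Finset.le_sup'
      (fun r : ℕ => ((r : ℚ)⁻¹) • (aval ν f - aval ν (f.hasseDeriv r))) hmem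

end Aux4

/-- If `Q, Q'` are key polynomials for `ν` with `ε(Q) < ε(Q')` and
`a_Q, a_{Q'}` are roots of `Q, Q'` with `μ(x - a_Q) = δ(Q)`, `μ(x - a_{Q'}) = δ(Q')`, then
`μ(a_{Q'} - a_Q) = min{μ(x - a_{Q'}), μ(x - a_Q)} = μ(x - a_Q) = ε(Q)`. -/
theorem value_sub_roots_of_keyPolys {K : Type*} [Field K] {Γ : Type*}
    [AddCommGroup Γ] [LinearOrder Γ] [IsOrderedAddMonoid Γ] [Module ℚ Γ] [PosSMulStrictMono ℚ Γ] [PosSMulReflectLT ℚ Γ]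
    {L : Type*} [Field L] [Algebra K L] [IsAlgClosure K L]
    (ν : AddValuation (Polynomial K) (WithTop Γ)) (μ : AddValuation (Polynomial L) (WithTop Γ))
    (hν : TrivialSupport ν) (hμ : TrivialSupport μ) (hext : IsExtension μ ν)
    (Q Q' : Polynomial K) (hQ : IsKeyPoly ν Q) (hQ' : IsKeyPoly ν Q')
    (heps : eps ν Q < eps ν Q')
    (aQ aQ' : L) (haQ : Polynomial.aeval aQ Q = 0) (haQ' : Polynomial.aeval aQ' Q' = 0)
    (hmaxQ : μ (X - C aQ) = ((delta μ Q : Γ) : WithTop Γ))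
    (hmaxQ' : μ (X - C aQ') = ((delta μ Q' : Γ) : WithTop Γ)) :
    μ (C aQ' - C aQ) = min (μ (X - C aQ')) (μ (X - C aQ)) ∧
      μ (C aQ' - C aQ) = μ (X - C aQ) ∧
      μ (X - C aQ) = ((eps ν Q : Γ) : WithTop Γ) := by
  have e1 : eps ν Q = delta μ Q := my_eps_eq_delta ν μ hν hμ hext Q hQ.1 hQ.2.1
  have e2 : eps ν Q' = delta μ Q' := my_eps_eq_delta ν μ hν hμ hext Q' hQ'.1 hQ'.2.1
  have hlt : μ (X - C aQ) < μ (X - C aQ') := by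
    rw [hmaxQ, hmaxQ', WithTop.coe_lt_coe, ← e1, ← e2]
    exact heps
  have hkey : (C aQ' - C aQ : Polynomial L) = (X - C aQ) - (X - C aQ') := by ring
  have h1 : μ (C aQ' - C aQ) = μ (X - C aQ) := by
    rw [hkey]
    exact μ.map_sub_eq_of_lt_left hlt
  refine ⟨by rw [h1, min_eq_right hlt.le], h1, by rw [hmaxQ, e1]⟩
end

section
/- Let K be a field and ν a valuation on K[x] with trivial support, extended to K(x). If Λ is a complete sequence of key polynomials for ν having a last element Q, then ν = ν_Q, and consequently ν is valuation-transcendental. -/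
open Polynomial

/-- `OrderedSMul` as it stood in Mathlib (removed since): strict monotonicity and strict
reflection of `<` under scalar multiplication by positive elements. -/
class OrderedSMul (R M : Type*) [Semiring R] [PartialOrder R] [AddCommMonoid M] [PartialOrder M]
    [SMulWithZero R M] : Prop where
  smul_lt_smul_of_pos : ∀ {a b : M}, ∀ {c : R}, a < b → 0 < c → c • a < c • b
  lt_of_smul_lt_smul_of_pos : ∀ {a b : M}, ∀ {c : R}, c • a < c • b → 0 < c → a < b


section Infra

open Finset Polynomial

variable {K : Type*} [Field K] {Γ : Type*} [AddCommGroup Γ] [LinearOrder Γ] [IsOrderedAddMonoid Γ]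

namespace KeyAux

theorem nu_ne_top (ν : AddValuation (Polynomial K) (WithTop Γ)) (hν : TrivialSupport ν)
    {f : Polynomial K} (hf : f ≠ 0) : ν f ≠ ⊤ := fun h => hf (hν f h)

theorem coe_aval (ν : AddValuation (Polynomial K) (WithTop Γ))
    {f : Polynomial K} (hf : ν f ≠ ⊤) : ((aval ν f : Γ) : WithTop Γ) = ν f := by
  obtain ⟨γ, hγ⟩ := WithTop.ne_top_iff_exists.mp hf
  rw [aval, ← hγ]
  rfl

theorem inf_range_succ_bot {α : Type*} [SemilatticeInf α] [OrderTop α] (g : ℕ → α) (n : ℕ) :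
    (range (n+1)).inf g = g 0 ⊓ (range n).inf (fun j => g (j+1)) := by
  induction n with
  | zero => simp
  | succ n ih =>
      rw [Finset.range_add_one, Finset.inf_insert, ih, Finset.range_add_one, Finset.inf_insert,
        inf_left_comm]

theorem add_inf' (c : WithTop Γ) (s : Finset ℕ) (hs : s.Nonempty) (g : ℕ → WithTop Γ) :
    c + s.inf g = s.inf (fun i => c + g i) := by
  induction hs using Finset.Nonempty.cons_induction with
  | singleton a => simp
  | cons a s ha hs ih =>
      rw [Finset.inf_cons, Finset.inf_cons, ← ih, ← min_add_add_left]

theorem inf_range_ext (g : ℕ → WithTop Γ) {m M : ℕ} (h : m ≤ M)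
    (hg : ∀ i, m < i → g i = ⊤) :
    (range (M+1)).inf g = (range (m+1)).inf g := by
  apply le_antisymm
  · exact Finset.inf_mono (Finset.range_subset_range.2 (by omega))
  · apply Finset.le_inf
    intro i hi
    rcases le_or_gt i m with h' | h'
    · exact Finset.inf_le (Finset.mem_range.2 (by omega))
    · rw [hg i h']; exact le_top

theorem nu_sum_ge (ν : AddValuation (Polynomial K) (WithTop Γ)) {ι : Type*} (s : Finset ι)
    (g : ι → Polynomial K) :
    s.inf (fun i => ν (g i)) ≤ ν (∑ i ∈ s, g i) :=
  ν.map_le_sum fun i hi => Finset.inf_le hi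

theorem nu_sum_eq (ν : AddValuation (Polynomial K) (WithTop Γ)) {ι : Type*} [DecidableEq ι]
    (s : Finset ι) (g : ι → Polynomial K) (k₀ : ι) (hk : k₀ ∈ s)
    (htop : ν (g k₀) ≠ ⊤)
    (hlt : ∀ k ∈ s, k ≠ k₀ → ν (g k₀) < ν (g k)) :
    ν (∑ i ∈ s, g i) = ν (g k₀) := by
  rw [← Finset.add_sum_erase s g hk]
  exact ν.map_add_eq_of_lt_left (ν.map_lt_sum' (lt_top_iff_ne_top.2 htop)
    fun i hi => hlt i (Finset.mem_of_mem_erase hi) (Finset.ne_of_mem_erase hi))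

variable {Q : Polynomial K}

theorem qCoeff_zero_eq (hQm : Q.Monic) (p : Polynomial K) : qCoeff Q 0 p = p %ₘ Q := by
  show p % Q = p %ₘ Q
  rw [Polynomial.modByMonic_eq_mod p hQm]

theorem qCoeff_succ_eq (hQm : Q.Monic) (p : Polynomial K) (n : ℕ) :
    qCoeff Q (n+1) p = qCoeff Q n (p /ₘ Q) := by
  show qCoeff Q n (p / Q) = _
  rw [Polynomial.divByMonic_eq_div p hQm]

theorem qCoeff_zero_poly (hQm : Q.Monic) (n : ℕ) : qCoeff Q n 0 = 0 := by
  induction n with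
  | zero => rw [qCoeff_zero_eq hQm, Polynomial.zero_modByMonic]
  | succ n ih => rw [qCoeff_succ_eq hQm, Polynomial.zero_divByMonic]; exact ih

theorem qCoeff_degree_lt (hQm : Q.Monic) (i : ℕ) (p : Polynomial K) :
    (qCoeff Q i p).degree < Q.degree := by
  induction i generalizing p with
  | zero => rw [qCoeff_zero_eq hQm]; exact Polynomial.degree_modByMonic_lt p hQm
  | succ i ih => rw [qCoeff_succ_eq hQm]; exact ih _

theorem qCoeff_small_succ (hQm : Q.Monic) (hp : p.degree < Q.degree) (i : ℕ) :
    qCoeff Q (i+1) p = 0 := by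
  rw [qCoeff_succ_eq hQm, (Polynomial.divByMonic_eq_zero_iff hQm).2 hp, qCoeff_zero_poly hQm]

theorem qCoeff_eq_zero (hQm : Q.Monic) (hQd : 0 < Q.natDegree) :
    ∀ i (p : Polynomial K), p.natDegree < i → qCoeff Q i p = 0 := by
  intro i
  induction i with
  | zero => intro p hp; omega
  | succ i ih =>
      intro p hp
      rw [qCoeff_succ_eq hQm]
      by_cases h0 : p /ₘ Q = 0
      · rw [h0]; exact qCoeff_zero_poly hQm _
      · have hnd : ¬ p.degree < Q.degree := fun hc => h0 ((Polynomial.divByMonic_eq_zero_iff hQm).2 hc)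
        have hge : Q.natDegree ≤ p.natDegree := Polynomial.natDegree_le_natDegree (not_lt.1 hnd)
        apply ih
        rw [Polynomial.natDegree_divByMonic p hQm]
        omega

theorem sum_qCoeff_small (hQm : Q.Monic) {p : Polynomial K} (hp : p.degree < Q.degree) :
    ∑ i ∈ range (p.natDegree + 1), qCoeff Q i p * Q ^ i = p := by
  rw [Finset.sum_eq_single 0]
  · rw [qCoeff_zero_eq hQm, pow_zero, mul_one, (Polynomial.modByMonic_eq_self_iff hQm).2 hp]
  · intro i _ hi
    obtain ⟨j, rfl⟩ : ∃ j, i = j + 1 := ⟨i - 1, by omega⟩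
    rw [qCoeff_small_succ hQm hp, zero_mul]
  · intro h; exact absurd (Finset.mem_range.2 (by omega)) h

theorem sum_qCoeff (hQm : Q.Monic) (hQd : 0 < Q.natDegree) (f : Polynomial K) :
    ∑ i ∈ range (f.natDegree + 1), qCoeff Q i f * Q ^ i = f := by
  generalize hn : f.natDegree = n
  induction n using Nat.strong_induction_on generalizing f with
  | _ n ih =>
  subst hn
  by_cases hsm : f.degree < Q.degree
  · exact sum_qCoeff_small hQm hsm
  · push_neg at hsm
    have hf0 : f ≠ 0 := by
      intro h
      rw [h, Polynomial.degree_zero, le_bot_iff, Polynomial.degree_eq_bot] at hsm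
      exact hQm.ne_zero hsm
    have hdle : Q.natDegree ≤ f.natDegree := Polynomial.natDegree_le_natDegree hsm
    set h := f /ₘ Q with hh
    have hh0 : h ≠ 0 := by
      rw [hh, Ne, Polynomial.divByMonic_eq_zero_iff hQm]; exact not_lt.2 hsm
    have hnh : h.natDegree = f.natDegree - Q.natDegree := Polynomial.natDegree_divByMonic f hQm
    have hlt : h.natDegree < f.natDegree := by omega
    rw [Finset.sum_range_succ']
    have e1 : ∀ j, qCoeff Q (j+1) f = qCoeff Q j h := fun j => qCoeff_succ_eq hQm f j
    calc (∑ j ∈ range f.natDegree, qCoeff Q (j+1) f * Q ^ (j+1)) + qCoeff Q 0 f * Q ^ 0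
        = Q * (∑ j ∈ range f.natDegree, qCoeff Q j h * Q ^ j) + f %ₘ Q := by
          rw [Finset.mul_sum, qCoeff_zero_eq hQm, pow_zero, mul_one]
          congr 1
          apply Finset.sum_congr rfl
          intro j _
          rw [e1 j, pow_succ]
          ring
      _ = Q * h + f %ₘ Q := by
          congr 1
          have hsub : ∑ j ∈ range f.natDegree, qCoeff Q j h * Q ^ j
              = ∑ j ∈ range (h.natDegree + 1), qCoeff Q j h * Q ^ j :=
            (Finset.sum_subset (Finset.range_subset_range.2 (by omega)) (fun i _ hi => by
              rw [qCoeff_eq_zero hQm hQd i h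
                (by simp only [Finset.mem_range, not_lt] at hi; omega), zero_mul])).symm
          rw [hsub, ih h.natDegree hlt h rfl]
      _ = f := by rw [add_comm]; exact Polynomial.modByMonic_add_div f Q

theorem trunc_ext (ν : AddValuation (Polynomial K) (WithTop Γ)) (hQm : Q.Monic)
    (hQd : 0 < Q.natDegree) (p : Polynomial K) {N : ℕ} (hN : p.natDegree ≤ N) :
    trunc ν Q p = (range (N+1)).inf (fun i => ν (qCoeff Q i p * Q ^ i)) := by
  rw [trunc]
  exact (inf_range_ext _ hN (fun i hi => by
    rw [qCoeff_eq_zero hQm hQd i p hi, zero_mul, ν.map_zero])).symm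

theorem trunc_le_nu (ν : AddValuation (Polynomial K) (WithTop Γ)) (hQm : Q.Monic)
    (hQd : 0 < Q.natDegree) (p : Polynomial K) : trunc ν Q p ≤ ν p := by
  conv_rhs => rw [← sum_qCoeff hQm hQd p]
  exact nu_sum_ge ν _ _

theorem trunc_zero' (ν : AddValuation (Polynomial K) (WithTop Γ)) (hQm : Q.Monic) :
    trunc ν Q 0 = ⊤ := by
  rw [trunc]
  simp [qCoeff_zero_poly hQm]

theorem trunc_small (ν : AddValuation (Polynomial K) (WithTop Γ)) (hQm : Q.Monic)
    {p : Polynomial K} (hp : p.degree < Q.degree) : trunc ν Q p = ν p := by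
  rw [trunc]
  apply le_antisymm
  · refine le_trans (Finset.inf_le (Finset.mem_range.2 (Nat.succ_pos _))) ?_
    rw [qCoeff_zero_eq hQm, pow_zero, mul_one, (Polynomial.modByMonic_eq_self_iff hQm).2 hp]
  · apply Finset.le_inf
    intro i _
    cases i with
    | zero =>
        rw [qCoeff_zero_eq hQm, pow_zero, mul_one, (Polynomial.modByMonic_eq_self_iff hQm).2 hp]
    | succ j =>
        rw [qCoeff_small_succ hQm hp, zero_mul, ν.map_zero]
        exact le_top

theorem trunc_rec (ν : AddValuation (Polynomial K) (WithTop Γ)) (hQm : Q.Monic)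
    (hQd : 0 < Q.natDegree) {p : Polynomial K} (hp : Q.degree ≤ p.degree) :
    trunc ν Q p = min (ν (p %ₘ Q)) (ν Q + trunc ν Q (p /ₘ Q)) := by
  have hp0 : p ≠ 0 := by
    intro h; rw [h, Polynomial.degree_zero, le_bot_iff, Polynomial.degree_eq_bot] at hp
    exact hQm.ne_zero hp
  have hdle : Q.natDegree ≤ p.natDegree := Polynomial.natDegree_le_natDegree hp
  have hnp1 : 1 ≤ p.natDegree := le_trans hQd hdle
  set h := p /ₘ Q with hh
  have hnh : h.natDegree ≤ p.natDegree - 1 := by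
    rw [hh, Polynomial.natDegree_divByMonic p hQm]; omega
  rw [trunc, inf_range_succ_bot]
  have e0 : ν (qCoeff Q 0 p * Q ^ 0) = ν (p %ₘ Q) := by
    rw [qCoeff_zero_eq hQm, pow_zero, mul_one]
  have e1 : ∀ j, ν (qCoeff Q (j+1) p * Q ^ (j+1)) = ν Q + ν (qCoeff Q j h * Q ^ j) := by
    intro j
    rw [qCoeff_succ_eq hQm, pow_succ, ← hh, show qCoeff Q j h * (Q ^ j * Q) = Q * (qCoeff Q j h * Q ^ j) by ring,
      ν.map_mul]
  rw [e0]
  have hne : (range p.natDegree).Nonempty := ⟨0, Finset.mem_range.2 (by omega)⟩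
  have : (range p.natDegree).inf (fun j => ν (qCoeff Q (j+1) p * Q ^ (j+1)))
      = ν Q + trunc ν Q h := by
    rw [Finset.inf_congr rfl (fun j _ => e1 j), ← add_inf' _ _ hne]
    congr 1
    obtain ⟨m, hm⟩ : ∃ m, p.natDegree = m + 1 := ⟨p.natDegree - 1, by omega⟩
    rw [trunc_ext ν hQm hQd h (N := m) (by omega), hm]
  rw [this]


theorem expansion_div_mod (hQm : Q.Monic) (M : ℕ) (e : ℕ → Polynomial K)
    (he : ∀ j, (e j).degree < Q.degree) :
    (∑ j ∈ range (M+1), e j * Q ^ j) /ₘ Q = ∑ j ∈ range M, e (j+1) * Q ^ j ∧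
    (∑ j ∈ range (M+1), e j * Q ^ j) %ₘ Q = e 0 := by
  apply Polynomial.div_modByMonic_unique _ _ hQm
  constructor
  · rw [Finset.sum_range_succ', Finset.mul_sum, pow_zero, mul_one, add_comm]
    congr 1
    apply Finset.sum_congr rfl
    intro j _
    rw [pow_succ]
    ring
  · exact he 0

theorem qCoeff_read (hQm : Q.Monic) :
    ∀ (k M : ℕ) (e : ℕ → Polynomial K), (∀ j, (e j).degree < Q.degree) → k ≤ M →
      qCoeff Q k (∑ j ∈ range (M+1), e j * Q ^ j) = e k := by
  intro k
  induction k with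
  | zero =>
      intro M e he _
      rw [qCoeff_zero_eq hQm]
      exact (expansion_div_mod hQm M e he).2
  | succ k ihk =>
      intro M e he hk
      obtain ⟨M', rfl⟩ : ∃ M', M = M' + 1 := ⟨M - 1, by omega⟩
      rw [qCoeff_succ_eq hQm, (expansion_div_mod hQm _ e he).1]
      exact ihk M' (fun j => e (j+1)) (fun j => he (j+1)) (by omega)

theorem nsmul_ne_top {x : WithTop Γ} (hx : x ≠ ⊤) (m : ℕ) : m • x ≠ ⊤ := by
  induction m with
  | zero => simp
  | succ m ih =>
      rw [succ_nsmul]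
      exact WithTop.add_ne_top.2 ⟨ih, hx⟩

theorem le_zero_of_add_le {x y : WithTop Γ} (hx : x ≠ ⊤) (h : x + y ≤ x) : y ≤ 0 := by
  lift x to Γ using hx
  cases y using WithTop.recTopCoe with
  | top => exact absurd h (by rw [add_top]; exact not_le.2 (lt_top_iff_ne_top.2 WithTop.coe_ne_top))
  | coe y =>
      rw [← WithTop.coe_add, ← WithTop.coe_zero, WithTop.coe_le_coe] at *
      exact (add_le_add_iff_left x).1 (by rwa [add_zero])

theorem eq_zero_of_add_eq {x y : WithTop Γ} (hx : x ≠ ⊤) (h : y + x = x) : y = 0 := by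
  have := WithTop.add_right_cancel hx (by rw [h, zero_add] : y + x = 0 + x)
  exact this

section EpsTheory

variable [Module ℚ Γ] [OrderedSMul ℚ Γ]
variable (ν : AddValuation (Polynomial K) (WithTop Γ))

instance posSMulStrictMono_of_orderedSMul : PosSMulStrictMono ℚ Γ :=
  ⟨fun _ ha _ _ hbc => OrderedSMul.smul_lt_smul_of_pos hbc ha⟩

theorem mem_epsSupport {f : Polynomial K} {r : ℕ} :
    r ∈ epsSupport f ↔ (1 ≤ r ∧ r ≤ f.natDegree) ∧ f.hasseDeriv r ≠ 0 := by
  rw [epsSupport]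
  rw [@Finset.mem_filter _ _ (Classical.decPred _), Finset.mem_Icc]

theorem epsSupport_nonempty {f : Polynomial K} (hf : 0 < f.natDegree) :
    (epsSupport f).Nonempty := by
  refine ⟨f.natDegree, mem_epsSupport.2 ⟨⟨hf, le_refl _⟩, ?_⟩⟩
  intro h
  have h0 : f ≠ 0 := fun hz => by simp [hz] at hf
  have h2 := congrArg (fun p => Polynomial.coeff p 0) h
  simp only [Polynomial.hasseDeriv_coeff, zero_add, Nat.choose_self, Nat.cast_one, one_mul,
    Polynomial.coeff_zero] at h2
  exact (Polynomial.leadingCoeff_ne_zero.2 h0) h2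

theorem eps_eq_sup' {f : Polynomial K} (h : (epsSupport f).Nonempty) :
    eps ν f = (epsSupport f).sup' h fun r => ((r : ℚ)⁻¹) • (aval ν f - aval ν (f.hasseDeriv r)) := by
  rw [eps, dif_pos h]

theorem nu_le_hasse_add (hν : TrivialSupport ν) {f : Polynomial K} (hf : f ≠ 0) (s : ℕ) :
    ν f ≤ ν (f.hasseDeriv s) + (((s : ℚ) • eps ν f : Γ) : WithTop Γ) := by
  rcases Nat.eq_zero_or_pos s with rfl | hs
  · simp [Polynomial.hasseDeriv_zero']
  by_cases hd : f.hasseDeriv s = 0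
  · rw [hd, ν.map_zero, top_add]; exact le_top
  have hssup : s ∈ epsSupport f := by
    refine mem_epsSupport.2 ⟨⟨hs, ?_⟩, hd⟩
    by_contra hgt
    exact hd (Polynomial.hasseDeriv_eq_zero_of_lt_natDegree f s (by omega))
  have h1 : ((s : ℚ)⁻¹) • (aval ν f - aval ν (f.hasseDeriv s)) ≤ eps ν f := by
    rw [eps_eq_sup' ν ⟨s, hssup⟩]
    exact Finset.le_sup' (fun r : ℕ => ((r : ℚ)⁻¹) • (aval ν f - aval ν (f.hasseDeriv r))) hssup
  have hs0 : (0 : ℚ) < (s : ℚ) := by exact_mod_cast hs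
  have h2 : aval ν f - aval ν (f.hasseDeriv s) ≤ (s : ℚ) • eps ν f := by
    have h3 := smul_le_smul_of_nonneg_left h1 hs0.le
    rwa [smul_smul, mul_inv_cancel₀ (ne_of_gt hs0), one_smul] at h3
  rw [← coe_aval ν (nu_ne_top ν hν hf), ← coe_aval ν (nu_ne_top ν hν hd), ← WithTop.coe_add,
    WithTop.coe_le_coe]
  have h4 := sub_le_iff_le_add.1 h2
  rwa [add_comm] at h4

theorem eps_le_of_bound (hν : TrivialSupport ν) {f : Polynomial K} (hf0 : f ≠ 0)
    (hfd : 0 < f.natDegree) {e : Γ}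
    (hb : ∀ s : ℕ, 1 ≤ s → ν f ≤ ν (f.hasseDeriv s) + (((s : ℚ) • e : Γ) : WithTop Γ)) :
    eps ν f ≤ e := by
  rw [eps_eq_sup' ν (epsSupport_nonempty hfd)]
  apply Finset.sup'_le
  intro r hr
  have hr' := mem_epsSupport.1 hr
  have h1 := hb r hr'.1.1
  rw [← coe_aval ν (nu_ne_top ν hν hf0), ← coe_aval ν (nu_ne_top ν hν hr'.2), ← WithTop.coe_add,
    WithTop.coe_le_coe] at h1
  have hr0 : (0 : ℚ) < (r : ℚ) := by exact_mod_cast hr'.1.1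
  have h2 : aval ν f - aval ν (f.hasseDeriv r) ≤ (r : ℚ) • e :=
    sub_le_iff_le_add.2 (by rwa [add_comm] at h1)
  calc ((r : ℚ)⁻¹) • (aval ν f - aval ν (f.hasseDeriv r)) ≤ ((r : ℚ)⁻¹) • ((r : ℚ) • e) :=
        smul_le_smul_of_nonneg_left h2 (by positivity)
    _ = e := by rw [smul_smul, inv_mul_cancel₀ (ne_of_gt hr0), one_smul]

theorem nu_lt_hasse_add (hν : TrivialSupport ν) {f : Polynomial K} (hf : f ≠ 0) {s : ℕ}
    (hs : 1 ≤ s)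
    (hns : s ∈ epsSupport f →
      ((s : ℚ)⁻¹) • (aval ν f - aval ν (f.hasseDeriv s)) ≠ eps ν f) :
    ν f < ν (f.hasseDeriv s) + (((s : ℚ) • eps ν f : Γ) : WithTop Γ) := by
  by_cases hd : f.hasseDeriv s = 0
  · rw [hd, ν.map_zero, top_add]; exact lt_top_iff_ne_top.2 (nu_ne_top ν hν hf)
  have hssup : s ∈ epsSupport f := by
    refine mem_epsSupport.2 ⟨⟨hs, ?_⟩, hd⟩
    by_contra hgt
    exact hd (Polynomial.hasseDeriv_eq_zero_of_lt_natDegree f s (by omega))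
  have hle : ((s : ℚ)⁻¹) • (aval ν f - aval ν (f.hasseDeriv s)) ≤ eps ν f := by
    rw [eps_eq_sup' ν ⟨s, hssup⟩]
    exact Finset.le_sup' (fun r : ℕ => ((r : ℚ)⁻¹) • (aval ν f - aval ν (f.hasseDeriv r))) hssup
  have hlt := lt_of_le_of_ne hle (hns hssup)
  have hs0 : (0 : ℚ) < (s : ℚ) := by exact_mod_cast hs
  have h2 : aval ν f - aval ν (f.hasseDeriv s) < (s : ℚ) • eps ν f := by
    have h3 := smul_lt_smul_of_pos_left hlt hs0
    rwa [smul_smul, mul_inv_cancel₀ (ne_of_gt hs0), one_smul] at h3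
  rw [← coe_aval ν (nu_ne_top ν hν hf), ← coe_aval ν (nu_ne_top ν hν hd), ← WithTop.coe_add,
    WithTop.coe_lt_coe]
  have h4 := sub_lt_iff_lt_add.1 h2
  rwa [add_comm] at h4

theorem nu_lt_hasse_add_of_deg_lt (hν : TrivialSupport ν) {Q : Polynomial K}
    (hQ : IsKeyPoly ν Q) {a : Polynomial K} (ha : a ≠ 0) (hdeg : a.degree < Q.degree)
    {s : ℕ} (hs : 1 ≤ s) :
    ν a < ν (a.hasseDeriv s) + (((s : ℚ) • eps ν Q : Γ) : WithTop Γ) := by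
  by_cases hd : a.hasseDeriv s = 0
  · rw [hd, ν.map_zero, top_add]; exact lt_top_iff_ne_top.2 (nu_ne_top ν hν ha)
  rcases Nat.eq_zero_or_pos a.natDegree with h0 | hpos
  · exact absurd (Polynomial.hasseDeriv_eq_zero_of_lt_natDegree a s (by omega)) hd
  have hna : a.natDegree < Q.natDegree := Polynomial.natDegree_lt_natDegree ha hdeg
  have hlt : eps ν a < eps ν Q := by
    by_contra hle
    push_neg at hle
    exact absurd (hQ.2.2 a hpos hle) (by omega)
  have hs0 : (0 : ℚ) < (s : ℚ) := by exact_mod_cast hs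
  calc ν a ≤ ν (a.hasseDeriv s) + (((s : ℚ) • eps ν a : Γ) : WithTop Γ) :=
        nu_le_hasse_add ν hν ha s
    _ < ν (a.hasseDeriv s) + (((s : ℚ) • eps ν Q : Γ) : WithTop Γ) := by
        apply WithTop.add_lt_add_left (nu_ne_top ν hν hd)
        exact_mod_cast smul_lt_smul_of_pos_left hlt hs0

theorem inf_add' {ι : Type*} (c : WithTop Γ) (s : Finset ι) (hs : s.Nonempty)
    (g : ι → WithTop Γ) :
    s.inf (fun i => g i + c) = s.inf g + c := by
  induction hs using Finset.Nonempty.cons_induction with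
  | singleton a => simp
  | cons a s ha hs ih =>
      rw [Finset.inf_cons, Finset.inf_cons, ih, min_add_add_right]

theorem prod_bound (hν : TrivialSupport ν) {Q : Polynomial K} (hQ : IsKeyPoly ν Q)
    {a : Polynomial K} (ha : a ≠ 0) (hdeg : a.degree < Q.degree) (i : ℕ) :
    ∀ s : ℕ, ν (a * Q ^ i) ≤ ν ((a * Q ^ i).hasseDeriv s) + (((s : ℚ) • eps ν Q : Γ) : WithTop Γ) := by
  induction i with
  | zero =>
      intro s
      rcases Nat.eq_zero_or_pos s with rfl | hs
      · simp [Polynomial.hasseDeriv_zero']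
      · simpa using (nu_lt_hasse_add_of_deg_lt ν hν hQ ha hdeg hs).le
  | succ i ih =>
      intro s
      have hQ0 : Q ≠ 0 := hQ.1.ne_zero
      have hsplit : ∀ (x y : WithTop Γ) (u v : ℕ), u + v = s →
          (x + (((u : ℚ) • eps ν Q : Γ) : WithTop Γ)) + (y + (((v : ℚ) • eps ν Q : Γ) : WithTop Γ))
            = (x + y) + (((s : ℚ) • eps ν Q : Γ) : WithTop Γ) := by
        intro x y u v huv
        have hc : ((s : ℚ)) = (u : ℚ) + (v : ℚ) := by exact_mod_cast huv.symm
        rw [hc, add_smul, WithTop.coe_add]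
        abel
      have key : ∀ p ∈ Finset.HasAntidiagonal.antidiagonal s,
          ν (a * Q ^ i) + ν Q ≤ ν ((a * Q ^ i).hasseDeriv p.1 * Q.hasseDeriv p.2)
            + (((s : ℚ) • eps ν Q : Γ) : WithTop Γ) := by
        intro p hp
        have hpq : p.1 + p.2 = s := Finset.HasAntidiagonal.mem_antidiagonal.1 hp
        have h1 := ih p.1
        have h2 := nu_le_hasse_add ν hν hQ0 p.2
        calc ν (a * Q ^ i) + ν Q
            ≤ (ν ((a * Q ^ i).hasseDeriv p.1) + (((p.1 : ℚ) • eps ν Q : Γ) : WithTop Γ))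
              + (ν (Q.hasseDeriv p.2) + (((p.2 : ℚ) • eps ν Q : Γ) : WithTop Γ)) := add_le_add h1 h2
          _ = (ν ((a * Q ^ i).hasseDeriv p.1) + ν (Q.hasseDeriv p.2))
              + (((s : ℚ) • eps ν Q : Γ) : WithTop Γ) := hsplit _ _ p.1 p.2 hpq
          _ = ν ((a * Q ^ i).hasseDeriv p.1 * Q.hasseDeriv p.2)
              + (((s : ℚ) • eps ν Q : Γ) : WithTop Γ) := by rw [ν.map_mul]
      have hne : (Finset.HasAntidiagonal.antidiagonal s).Nonempty := ⟨(0, s), by simp⟩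
      have hexp : (a * Q ^ (i + 1)).hasseDeriv s
          = ∑ p ∈ Finset.HasAntidiagonal.antidiagonal s, (a * Q ^ i).hasseDeriv p.1 * Q.hasseDeriv p.2 := by
        rw [show a * Q ^ (i + 1) = a * Q ^ i * Q by ring]
        exact Polynomial.hasseDeriv_mul _ _ _
      calc ν (a * Q ^ (i + 1)) = ν (a * Q ^ i) + ν Q := by
            rw [show a * Q ^ (i + 1) = a * Q ^ i * Q by ring, ν.map_mul]
        _ ≤ (Finset.HasAntidiagonal.antidiagonal s).inf
              (fun p => ν ((a * Q ^ i).hasseDeriv p.1 * Q.hasseDeriv p.2))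
              + (((s : ℚ) • eps ν Q : Γ) : WithTop Γ) := by
            rw [← inf_add' _ _ hne]
            exact Finset.le_inf key
        _ ≤ ν ((a * Q ^ (i + 1)).hasseDeriv s) + (((s : ℚ) • eps ν Q : Γ) : WithTop Γ) := by
            rw [hexp]
            exact add_le_add_left (nu_sum_ge ν _ _) _

theorem trunc_le_hasse (hν : TrivialSupport ν) {Q : Polynomial K} (hQ : IsKeyPoly ν Q)
    (f : Polynomial K) (s : ℕ) :
    trunc ν Q f ≤ ν (f.hasseDeriv s) + (((s : ℚ) • eps ν Q : Γ) : WithTop Γ) := by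
  have hQm := hQ.1
  have hQd := hQ.2.1
  have hexp : f.hasseDeriv s = ∑ i ∈ range (f.natDegree + 1), (qCoeff Q i f * Q ^ i).hasseDeriv s := by
    conv_lhs => rw [← sum_qCoeff hQm hQd f]
    exact map_sum (Polynomial.hasseDeriv s) _ _
  have hbound : ∀ i ∈ range (f.natDegree + 1),
      trunc ν Q f ≤ ν ((qCoeff Q i f * Q ^ i).hasseDeriv s) + (((s : ℚ) • eps ν Q : Γ) : WithTop Γ) := by
    intro i hi
    have h1 : trunc ν Q f ≤ ν (qCoeff Q i f * Q ^ i) := Finset.inf_le hi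
    by_cases h0 : qCoeff Q i f = 0
    · rw [h0, zero_mul, map_zero, ν.map_zero, top_add]
      exact le_top
    · exact le_trans h1 (prod_bound ν hν hQ h0 (qCoeff_degree_lt hQm i f) i s)
  rw [hexp]
  have hne : (range (f.natDegree + 1)).Nonempty := ⟨0, by simp⟩
  calc trunc ν Q f ≤ (range (f.natDegree + 1)).inf
        (fun i => ν ((qCoeff Q i f * Q ^ i).hasseDeriv s)) + (((s : ℚ) • eps ν Q : Γ) : WithTop Γ) := by
        rw [← inf_add' _ _ hne]
        exact Finset.le_inf hbound
    _ ≤ _ := add_le_add_left (nu_sum_ge ν _ _) _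

theorem eps_le_eps_of_trunc_eq (hν : TrivialSupport ν) {q : Polynomial K} (hq : IsKeyPoly ν q)
    {f : Polynomial K} (hfd : 0 < f.natDegree) (heq : trunc ν q f = ν f) :
    eps ν f ≤ eps ν q := by
  have hf0 : f ≠ 0 := fun h => by simp [h] at hfd
  exact eps_le_of_bound ν hν hf0 hfd fun s _ => by
    rw [← heq]; exact trunc_le_hasse ν hν hq f s


theorem exists_hasse_le_trunc (hν : TrivialSupport ν) {Q : Polynomial K} (hQ : IsKeyPoly ν Q) :
    ∀ f : Polynomial K, f ≠ 0 →
      ∃ s : ℕ, ν (f.hasseDeriv s) + (((s : ℚ) • eps ν Q : Γ) : WithTop Γ) ≤ trunc ν Q f := by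
  have hQm := hQ.1
  have hQd := hQ.2.1
  have hQ0 : Q ≠ 0 := hQm.ne_zero
  have hQtop : ν Q ≠ ⊤ := nu_ne_top ν hν hQ0
  intro f
  generalize hn : f.natDegree = n
  induction n using Nat.strong_induction_on generalizing f with
  | _ n ih =>
  intro hf0
  subst hn
  by_cases hsm : f.degree < Q.degree
  · refine ⟨0, ?_⟩
    rw [trunc_small ν hQm hsm]
    simp [Polynomial.hasseDeriv_zero']
  push_neg at hsm
  set a := f %ₘ Q with ha
  set h := f /ₘ Q with hh
  have hh0 : h ≠ 0 := by rw [hh, Ne, Polynomial.divByMonic_eq_zero_iff hQm]; exact not_lt.2 hsm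
  have hfQ : Q.natDegree ≤ f.natDegree := Polynomial.natDegree_le_natDegree hsm
  have hnh : h.natDegree < f.natDegree := by
    rw [hh, Polynomial.natDegree_divByMonic f hQm]; omega
  have htr : trunc ν Q f = min (ν a) (ν Q + trunc ν Q h) := trunc_rec ν hQm hQd hsm
  have htrh_le : trunc ν Q h ≤ ν h := trunc_le_nu ν hQm hQd h
  have hνh_top : ν h ≠ ⊤ := nu_ne_top ν hν hh0
  have hfeq : f = Q * h + a := by
    rw [ha, hh, add_comm]; exact (Polynomial.modByMonic_add_div f Q).symm
  rcases lt_or_ge (ν a) (ν Q + trunc ν Q h) with hcase | hcase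
  · refine ⟨0, ?_⟩
    have hQh : ν a < ν (Q * h) := by
      rw [ν.map_mul]
      exact lt_of_lt_of_le hcase (add_le_add_right htrh_le _)
    have hfa : ν f = ν a := by
      conv_lhs => rw [hfeq]
      exact ν.map_add_eq_of_lt_right hQh
    rw [htr, min_eq_left hcase.le, ← hfa]
    simp [Polynomial.hasseDeriv_zero']
  · rw [htr, min_eq_right hcase]
    obtain ⟨s₀, hs₀⟩ := ih h.natDegree hnh h rfl hh0
    set T := range (h.natDegree + 1) with hT
    have hTne : T.Nonempty := ⟨0, by simp [hT]⟩
    set G : ℕ → WithTop Γ :=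
      fun t => ν (h.hasseDeriv t) + (((t : ℚ) • eps ν Q : Γ) : WithTop Γ) with hG
    set lam := T.inf' hTne G with hlam
    have hlam_all : ∀ t : ℕ, lam ≤ G t := by
      intro t
      by_cases htT : t ∈ T
      · exact Finset.inf'_le _ htT
      · have h1 : h.natDegree < t := by
          simp only [hT, Finset.mem_range, not_lt] at htT; omega
        have h2 : G t = ⊤ := by
          rw [hG]
          simp only
          rw [Polynomial.hasseDeriv_eq_zero_of_lt_natDegree h t h1, ν.map_zero, top_add]
        rw [h2]; exact le_top
    have hlam_le : lam ≤ trunc ν Q h := le_trans (hlam_all s₀) hs₀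
    have hlam_top : lam ≠ ⊤ := ne_top_of_le_ne_top hνh_top (le_trans hlam_le htrh_le)
    set J := T.filter (fun t => G t = lam) with hJ
    have hJne : J.Nonempty := by
      obtain ⟨r₀, hr₀T, hr₀⟩ := Finset.exists_mem_eq_inf' hTne G
      exact ⟨r₀, Finset.mem_filter.2 ⟨hr₀T, hr₀.symm⟩⟩
    set r := J.max' hJne with hr
    have hrJ : r ∈ J := J.max'_mem hJne
    have hGr : G r = lam := (Finset.mem_filter.1 hrJ).2
    have hr_strict : ∀ t : ℕ, t ∉ J → lam < G t := by
      intro t ht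
      by_cases htT : t ∈ T
      · rcases lt_or_eq_of_le (hlam_all t) with h' | h'
        · exact h'
        · exact absurd (Finset.mem_filter.2 ⟨htT, h'.symm⟩) ht
      · have h1 : h.natDegree < t := by
          simp only [hT, Finset.mem_range, not_lt] at htT; omega
        have h2 : G t = ⊤ := by
          rw [hG]; simp only
          rw [Polynomial.hasseDeriv_eq_zero_of_lt_natDegree h t h1, ν.map_zero, top_add]
        rw [h2]
        exact lt_top_iff_ne_top.2 hlam_top
    have hQsupne : (epsSupport Q).Nonempty := epsSupport_nonempty hQd
    set OPT := (epsSupport Q).filter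
      (fun i : ℕ => ((i : ℚ)⁻¹) • (aval ν Q - aval ν (Q.hasseDeriv i)) = eps ν Q) with hOPT
    have hOPTne : OPT.Nonempty := by
      obtain ⟨i₀, hi₀, hieq⟩ := Finset.exists_mem_eq_sup' hQsupne
        (fun r : ℕ => ((r : ℚ)⁻¹) • (aval ν Q - aval ν (Q.hasseDeriv r)))
      refine ⟨i₀, Finset.mem_filter.2 ⟨hi₀, ?_⟩⟩
      rw [eps_eq_sup' ν hQsupne, hieq]
    set b := OPT.max' hOPTne with hb
    have hbO : b ∈ OPT := OPT.max'_mem hOPTne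
    have hbsup : b ∈ epsSupport Q := (Finset.mem_filter.1 hbO).1
    have hb1 : 1 ≤ b := (mem_epsSupport.1 hbsup).1.1
    have hbd0 : Q.hasseDeriv b ≠ 0 := (mem_epsSupport.1 hbsup).2
    have hbdtop : ν (Q.hasseDeriv b) ≠ ⊤ := nu_ne_top ν hν hbd0
    have hQb : ν Q = ν (Q.hasseDeriv b) + (((b : ℚ) • eps ν Q : Γ) : WithTop Γ) := by
      have heq := (Finset.mem_filter.1 hbO).2
      have hb0 : (0 : ℚ) < (b : ℚ) := by exact_mod_cast hb1
      have h2 : aval ν Q - aval ν (Q.hasseDeriv b) = (b : ℚ) • eps ν Q := by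
        rw [← heq, smul_smul, mul_inv_cancel₀ (ne_of_gt hb0), one_smul]
      have h3 : aval ν Q = aval ν (Q.hasseDeriv b) + (b : ℚ) • eps ν Q := by
        rw [← h2]; abel
      rw [← coe_aval ν hQtop, ← coe_aval ν hbdtop, ← WithTop.coe_add, h3]
    have hQ_strict : ∀ i : ℕ, 1 ≤ i → i ∉ OPT →
        ν Q < ν (Q.hasseDeriv i) + (((i : ℚ) • eps ν Q : Γ) : WithTop Γ) := by
      intro i hi hiO
      refine nu_lt_hasse_add ν hν hQ0 hi ?_
      intro hisup heq
      exact hiO (Finset.mem_filter.2 ⟨hisup, heq⟩)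
    have hQ_all : ∀ i : ℕ, ν Q ≤ ν (Q.hasseDeriv i) + (((i : ℚ) • eps ν Q : Γ) : WithTop Γ) :=
      fun i => nu_le_hasse_add ν hν hQ0 i
    refine ⟨b + r, ?_⟩
    set s := b + r with hs
    have hs1 : 1 ≤ s := by omega
    have hsplit : ∀ (x y : WithTop Γ) (u v : ℕ), u + v = s →
        (x + (((u : ℚ) • eps ν Q : Γ) : WithTop Γ)) + (y + (((v : ℚ) • eps ν Q : Γ) : WithTop Γ))
          = (x + y) + (((s : ℚ) • eps ν Q : Γ) : WithTop Γ) := by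
      intro x y u v huv
      have hc : ((s : ℚ)) = (u : ℚ) + (v : ℚ) := by exact_mod_cast huv.symm
      rw [hc, add_smul, WithTop.coe_add]
      abel
    have hrtop : ν (h.hasseDeriv r) ≠ ⊤ := by
      intro htop
      rw [hG] at hGr
      simp only at hGr
      rw [htop, top_add] at hGr
      exact hlam_top hGr.symm
    have hVtop : ν (Q.hasseDeriv b * h.hasseDeriv r) ≠ ⊤ := by
      rw [ν.map_mul]
      exact WithTop.add_ne_top.2 ⟨hbdtop, hrtop⟩
    have hVc : ν (Q.hasseDeriv b * h.hasseDeriv r) + (((s : ℚ) • eps ν Q : Γ) : WithTop Γ)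
        = ν Q + lam := by
      rw [ν.map_mul, ← hsplit _ _ b r rfl, ← hQb, ← hGr]
    have hterm : ∀ p ∈ Finset.HasAntidiagonal.antidiagonal s, p ≠ (b, r) →
        ν (Q.hasseDeriv b * h.hasseDeriv r) < ν (Q.hasseDeriv p.1 * h.hasseDeriv p.2) := by
      intro p hp hne
      have hpq : p.1 + p.2 = s := Finset.HasAntidiagonal.mem_antidiagonal.1 hp
      have hgoal : ν Q + lam
          < ν (Q.hasseDeriv p.1 * h.hasseDeriv p.2) + (((s : ℚ) • eps ν Q : Γ) : WithTop Γ) := by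
        rw [ν.map_mul, ← hsplit _ _ p.1 p.2 hpq]
        by_cases hpJ : p.2 ∈ J
        · have hp2r : p.2 ≤ r := Finset.le_max' J p.2 hpJ
          have hp1b : b < p.1 := by
            by_contra hle
            push_neg at hle
            rcases eq_or_lt_of_le hle with h'' | h''
            · exact hne (Prod.ext h'' (by omega))
            · omega
          have hp1O : p.1 ∉ OPT := fun hmem => absurd (Finset.le_max' OPT p.1 hmem) (by omega)
          have hQ1 : ν Q < ν (Q.hasseDeriv p.1) + (((p.1 : ℚ) • eps ν Q : Γ) : WithTop Γ) :=
            hQ_strict p.1 (by omega) hp1O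
          have hh2 : lam ≤ ν (h.hasseDeriv p.2) + (((p.2 : ℚ) • eps ν Q : Γ) : WithTop Γ) :=
            hlam_all p.2
          calc ν Q + lam
              < (ν (Q.hasseDeriv p.1) + (((p.1 : ℚ) • eps ν Q : Γ) : WithTop Γ)) + lam :=
                (WithTop.add_lt_add_iff_right hlam_top).2 hQ1
            _ ≤ _ := add_le_add_right hh2 _
        · have hh2 : lam < ν (h.hasseDeriv p.2) + (((p.2 : ℚ) • eps ν Q : Γ) : WithTop Γ) :=
            hr_strict p.2 hpJ
          calc ν Q + lam
              < ν Q + (ν (h.hasseDeriv p.2) + (((p.2 : ℚ) • eps ν Q : Γ) : WithTop Γ)) :=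
                WithTop.add_lt_add_left hQtop hh2
            _ ≤ _ := add_le_add_left (hQ_all p.1) _
      rw [← hVc] at hgoal
      exact (WithTop.add_lt_add_iff_right (WithTop.coe_ne_top)).1 hgoal
    have hsum1 : ν (∑ p ∈ Finset.HasAntidiagonal.antidiagonal s, Q.hasseDeriv p.1 * h.hasseDeriv p.2)
        = ν (Q.hasseDeriv b * h.hasseDeriv r) := by
      refine nu_sum_eq ν _ _ (b, r) (Finset.HasAntidiagonal.mem_antidiagonal.2 rfl) hVtop ?_
      intro k hk hkne
      exact hterm k hk hkne
    have haterm : ν (Q.hasseDeriv b * h.hasseDeriv r) < ν (a.hasseDeriv s) := by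
      by_cases ha0 : a = 0
      · rw [ha0, map_zero, ν.map_zero]
        exact lt_top_iff_ne_top.2 hVtop
      · have hdeglt : a.degree < Q.degree := ha ▸ Polynomial.degree_modByMonic_lt f hQm
        have h1 : ν a < ν (a.hasseDeriv s) + (((s : ℚ) • eps ν Q : Γ) : WithTop Γ) :=
          nu_lt_hasse_add_of_deg_lt ν hν hQ ha0 hdeglt hs1
        have h2 : ν Q + lam ≤ ν a := le_trans (add_le_add_right hlam_le _) hcase
        have h3 : ν (Q.hasseDeriv b * h.hasseDeriv r) + (((s : ℚ) • eps ν Q : Γ) : WithTop Γ)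
            < ν (a.hasseDeriv s) + (((s : ℚ) • eps ν Q : Γ) : WithTop Γ) := by
          rw [hVc]
          exact lt_of_le_of_lt h2 h1
        exact (WithTop.add_lt_add_iff_right (WithTop.coe_ne_top)).1 h3
    have hfds : f.hasseDeriv s
        = (∑ p ∈ Finset.HasAntidiagonal.antidiagonal s, Q.hasseDeriv p.1 * h.hasseDeriv p.2) + a.hasseDeriv s := by
      conv_lhs => rw [hfeq]
      rw [map_add]
      congr 1
      exact Polynomial.hasseDeriv_mul _ _ _
    have hfinal : ν (f.hasseDeriv s) = ν (Q.hasseDeriv b * h.hasseDeriv r) := by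
      rw [hfds, ← hsum1] at *
      exact ν.map_add_eq_of_lt_left (hsum1 ▸ haterm)
    rw [hfinal, hVc]
    exact add_le_add_right hlam_le _

theorem eps_lt_of_trunc_lt (hν : TrivialSupport ν) {Q : Polynomial K} (hQ : IsKeyPoly ν Q)
    {f : Polynomial K} (hlt : trunc ν Q f < ν f) : eps ν Q < eps ν f := by
  have hf0 : f ≠ 0 := by
    intro h
    rw [h, trunc_zero' ν hQ.1, ν.map_zero] at hlt
    exact lt_irrefl _ hlt
  obtain ⟨s, hsle⟩ := exists_hasse_le_trunc ν hν hQ f hf0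
  have hs_lt : ν (f.hasseDeriv s) + (((s : ℚ) • eps ν Q : Γ) : WithTop Γ) < ν f :=
    lt_of_le_of_lt hsle hlt
  have hs1 : 1 ≤ s := by
    rcases Nat.eq_zero_or_pos s with rfl | hp
    · exfalso
      rw [Polynomial.hasseDeriv_zero'] at hsle
      simp only [Nat.cast_zero, zero_smul, WithTop.coe_zero, add_zero] at hsle
      exact absurd hlt (not_lt.2 hsle)
    · exact hp
  have hd0 : f.hasseDeriv s ≠ 0 := by
    intro h
    rw [h, ν.map_zero, top_add] at hs_lt
    exact not_top_lt hs_lt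
  have hsup : s ∈ epsSupport f := by
    refine mem_epsSupport.2 ⟨⟨hs1, ?_⟩, hd0⟩
    by_contra hgt
    exact hd0 (Polynomial.hasseDeriv_eq_zero_of_lt_natDegree f s (by omega))
  have hftop := nu_ne_top ν hν hf0
  have hdtop := nu_ne_top ν hν hd0
  rw [← coe_aval ν hftop, ← coe_aval ν hdtop, ← WithTop.coe_add, WithTop.coe_lt_coe] at hs_lt
  have hs0 : (0 : ℚ) < (s : ℚ) := by exact_mod_cast hs1
  have h1 : (s : ℚ) • eps ν Q < aval ν f - aval ν (f.hasseDeriv s) :=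
    lt_sub_iff_add_lt.2 (by rwa [add_comm] at hs_lt)
  have h2 : eps ν Q < ((s : ℚ)⁻¹) • (aval ν f - aval ν (f.hasseDeriv s)) := by
    have h3 := smul_lt_smul_of_pos_left h1 (by positivity : (0 : ℚ) < (s : ℚ)⁻¹)
    rwa [smul_smul, inv_mul_cancel₀ (ne_of_gt hs0), one_smul] at h3
  refine lt_of_lt_of_le h2 ?_
  rw [eps_eq_sup' ν ⟨s, hsup⟩]
  exact Finset.le_sup' (fun r : ℕ => ((r : ℚ)⁻¹) • (aval ν f - aval ν (f.hasseDeriv r))) hsup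


end EpsTheory

end KeyAux

end Infra

/-- If `Λ` is a complete sequence of key polynomials for `ν` having a last
element `Q`, then `ν = ν_Q` and consequently `ν` is valuation-transcendental. -/
theorem trunc_eq_of_complete_with_last_element {K : Type*} [Field K] {Γ : Type*}
    [AddCommGroup Γ] [LinearOrder Γ] [IsOrderedAddMonoid Γ] [Module ℚ Γ] [OrderedSMul ℚ Γ]
    (ν : AddValuation (Polynomial K) (WithTop Γ)) (w : AddValuation (RatFunc K) (WithTop Γ))
    (hν : TrivialSupport ν) (hw : ExtendsToRatFunc w ν)
    (Λ : Set (Polynomial K))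
    (hkey : ∀ Q ∈ Λ, IsKeyPoly ν Q)
    (hdist : ∀ Q ∈ Λ, ∀ Q' ∈ Λ, eps ν Q = eps ν Q' → Q = Q')
    (hwo : Λ.WellFoundedOn fun Q Q' => eps ν Q < eps ν Q')
    (hcompl : ∀ f : Polynomial K, ∃ Q ∈ Λ, trunc ν Q f = ν f)
    (Q : Polynomial K) (hQΛ : Q ∈ Λ) (hlast : ∀ Q' ∈ Λ, eps ν Q' ≤ eps ν Q) :
    (∀ p : Polynomial K, ν p = trunc ν Q p) ∧ IsValuationTranscendental w := by
  classical
  have hQ : IsKeyPoly ν Q := hkey Q hQΛ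
  have hQm : Q.Monic := hQ.1
  have hQd : 0 < Q.natDegree := hQ.2.1
  have hQ0 : Q ≠ 0 := hQm.ne_zero
  have hQtop : ν Q ≠ ⊤ := KeyAux.nu_ne_top ν hν hQ0
  have hdQpos : (0 : WithBot ℕ) < Q.degree := by
    rw [Polynomial.degree_eq_natDegree hQ0]
    exact_mod_cast hQd
  -- Part 1 : ν = ν_Q
  have part1 : ∀ p : Polynomial K, ν p = trunc ν Q p := by
    intro p
    rcases eq_or_ne p 0 with rfl | hp0
    · rw [KeyAux.trunc_zero' ν hQm, ν.map_zero]
    have hle : trunc ν Q p ≤ ν p := KeyAux.trunc_le_nu ν hQm hQd p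
    rcases eq_or_lt_of_le hle with heq | hlt
    · exact heq.symm
    exfalso
    have h1 : eps ν Q < eps ν p := KeyAux.eps_lt_of_trunc_lt ν hν hQ hlt
    obtain ⟨Q', hQ'Λ, hQ'tr⟩ := hcompl p
    have hpd : 0 < p.natDegree := by
      by_contra hd
      push_neg at hd
      have hdp : p.degree < Q.degree := by
        refine lt_of_le_of_lt ?_ hdQpos
        refine le_trans Polynomial.degree_le_natDegree ?_
        exact_mod_cast hd
      rw [KeyAux.trunc_small ν hQm hdp] at hlt
      exact lt_irrefl _ hlt
    have h2 : eps ν p ≤ eps ν Q' :=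
      KeyAux.eps_le_eps_of_trunc_eq ν hν (hkey Q' hQ'Λ) hpd hQ'tr
    exact lt_irrefl _ (lt_of_lt_of_le h1 (h2.trans (hlast Q' hQ'Λ)))
  refine ⟨part1, ?_⟩
  -- Part 2 : valuation transcendence
  have halg : ∀ c : K, algebraMap K (RatFunc K) c = algebraMap (Polynomial K) (RatFunc K) (C c) := by
    intro c
    rw [IsScalarTower.algebraMap_apply K (Polynomial K) (RatFunc K) c, Polynomial.algebraMap_eq]
  by_cases hval : ∀ n : ℕ, 0 < n → ∀ c : K, c ≠ 0 → ν (Q ^ n) ≠ ν (C c)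
  · left
    refine ⟨algebraMap (Polynomial K) (RatFunc K) Q, RatFunc.algebraMap_ne_zero hQ0, ?_⟩
    intro n hn c hc
    rw [← map_pow, hw, halg c, hw]
    exact hval n hn c hc
  · right
    push_neg at hval
    obtain ⟨n, hn, c, hc, hvc⟩ := hval
    have hCc0 : C c ≠ 0 := fun h => hc (by simpa using h)
    have hνc_top : ν (C c) ≠ ⊤ := KeyAux.nu_ne_top ν hν hCc0
    set cQ : RatFunc K := algebraMap (Polynomial K) (RatFunc K) (C c) with hcQdef
    set fQ : RatFunc K := algebraMap (Polynomial K) (RatFunc K) Q with hfQdef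
    have hcQ0 : cQ ≠ 0 := RatFunc.algebraMap_ne_zero hCc0
    set g : RatFunc K := fQ ^ n / cQ with hgdef
    have hcg : cQ * g = fQ ^ n := by
      rw [hgdef, mul_comm]
      exact div_mul_cancel₀ _ hcQ0
    have hwg : w g = 0 := by
      have h2 : w cQ + w g = w (fQ ^ n) := by rw [← w.map_mul, hcg]
      rw [hcQdef, hw, hfQdef, ← map_pow, hw, ← hvc] at h2
      have h3 : w g + ν (Q ^ n) = ν (Q ^ n) := by rw [add_comm] at h2; rw [h2]
      exact KeyAux.eq_zero_of_add_eq (by rw [hvc]; exact hνc_top) h3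
    refine ⟨g, hwg, ?_⟩
    intro m cf h0 hex
    set S := ∑ i ∈ Finset.range (m + 1), algebraMap K (RatFunc K) (cf i) * g ^ i with hSdef
    have hge : (0 : WithTop Γ) ≤ w S := by
      apply w.map_le_sum
      intro i hi
      rw [w.map_mul, w.map_pow, hwg, smul_zero, add_zero]
      exact h0 i (Nat.lt_succ_iff.1 (Finset.mem_range.1 hi))
    obtain ⟨i₀, hi₀m, hwi₀⟩ := hex
    have hνcf : ν (C (cf i₀)) = 0 := by rw [← hw, ← halg]; exact hwi₀
    set e : ℕ → Polynomial K :=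
      fun j => if n ∣ j ∧ j / n ≤ m then C (cf (j / n) * c ^ (m - j / n)) else 0 with hedef
    have hedeg : ∀ j, (e j).degree < Q.degree := by
      intro j
      rw [hedef]
      simp only
      split
      · exact lt_of_le_of_lt Polynomial.degree_C_le hdQpos
      · rw [Polynomial.degree_zero]; exact lt_of_le_of_lt bot_le hdQpos
    have himg : ∀ i, i ≤ m → e (n * i) = C (cf i * c ^ (m - i)) := by
      intro i hi
      have hdvd : (n * i) / n = i := Nat.mul_div_cancel_left i hn
      rw [hedef]
      simp only
      rw [if_pos ⟨⟨i, rfl⟩, by rw [hdvd]; exact hi⟩, hdvd]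
    set P := ∑ i ∈ Finset.range (m + 1), C (cf i * c ^ (m - i)) * Q ^ (n * i) with hPdef
    have hPsum : P = ∑ j ∈ Finset.range (n * m + 1), e j * Q ^ j := by
      rw [hPdef]
      have hinj : ∀ x ∈ Finset.range (m + 1), ∀ y ∈ Finset.range (m + 1),
          n * x = n * y → x = y := by
        intro x _ y _ hxy
        exact Nat.eq_of_mul_eq_mul_left hn hxy
      calc (∑ i ∈ Finset.range (m + 1), C (cf i * c ^ (m - i)) * Q ^ (n * i))
          = ∑ i ∈ Finset.range (m + 1), e (n * i) * Q ^ (n * i) :=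
            Finset.sum_congr rfl (fun i hi => by
              rw [himg i (Nat.lt_succ_iff.1 (Finset.mem_range.1 hi))])
        _ = ∑ j ∈ (Finset.range (m + 1)).image (fun i => n * i), e j * Q ^ j :=
            (Finset.sum_image (f := fun j => e j * Q ^ j) (g := fun i => n * i) hinj).symm
        _ = ∑ j ∈ Finset.range (n * m + 1), e j * Q ^ j := by
            apply Finset.sum_subset
            · intro j hj
              obtain ⟨i, hi, rfl⟩ := Finset.mem_image.1 hj
              have h1 : i ≤ m := Nat.lt_succ_iff.1 (Finset.mem_range.1 hi)
              have h2 : n * i ≤ n * m := Nat.mul_le_mul_left n h1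
              exact Finset.mem_range.2 (by omega)
            · intro j hj hjno
              rw [hedef]
              simp only
              rw [if_neg, zero_mul]
              rintro ⟨⟨i, rfl⟩, hile⟩
              refine hjno (Finset.mem_image.2 ⟨(n * i) / n, ?_, ?_⟩)
              · rw [Nat.mul_div_cancel_left i hn]
                exact Finset.mem_range.2 (by
                  rw [Nat.mul_div_cancel_left i hn] at hile
                  omega)
              · rw [Nat.mul_div_cancel_left i hn]
    have hgi : ∀ i : ℕ, cQ ^ i * g ^ i = fQ ^ (n * i) := by
      intro i
      rw [← mul_pow, hcg, ← pow_mul]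
    have hiden : algebraMap (Polynomial K) (RatFunc K) P = cQ ^ m * S := by
      rw [hPdef, hSdef, map_sum, Finset.mul_sum]
      apply Finset.sum_congr rfl
      intro i hi
      have him : i ≤ m := Nat.lt_succ_iff.1 (Finset.mem_range.1 hi)
      have hmi : m - i + i = m := by omega
      calc algebraMap (Polynomial K) (RatFunc K) (C (cf i * c ^ (m - i)) * Q ^ (n * i))
          = algebraMap K (RatFunc K) (cf i) * cQ ^ (m - i) * fQ ^ (n * i) := by
            simp only [map_mul, map_pow, Polynomial.C_mul, Polynomial.C_pow]
            rw [← halg (cf i), ← hcQdef, ← hfQdef]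
        _ = cQ ^ m * (algebraMap K (RatFunc K) (cf i) * g ^ i) := by
            rw [← hgi i]
            calc algebraMap K (RatFunc K) (cf i) * cQ ^ (m - i) * (cQ ^ i * g ^ i)
                = algebraMap K (RatFunc K) (cf i) * (cQ ^ (m - i) * cQ ^ i) * g ^ i := by ring
              _ = cQ ^ m * (algebraMap K (RatFunc K) (cf i) * g ^ i) := by
                  rw [← pow_add, hmi]; ring
    have hP_le : ν P ≤ m • ν (C c) := by
      rw [part1 P]
      have hread : qCoeff Q (n * i₀) P = C (cf i₀ * c ^ (m - i₀)) := by
        rw [hPsum, KeyAux.qCoeff_read hQm (n * i₀) (n * m) e hedeg (Nat.mul_le_mul_left n hi₀m)]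
        exact himg i₀ hi₀m
      set N := max P.natDegree (n * m) with hNdef
      rw [KeyAux.trunc_ext ν hQm hQd P (N := N) (le_max_left _ _)]
      have hmem : n * i₀ ∈ Finset.range (N + 1) := by
        have h1 : n * i₀ ≤ n * m := Nat.mul_le_mul_left n hi₀m
        have h2 : n * m ≤ N := le_max_right _ _
        exact Finset.mem_range.2 (by omega)
      refine le_trans (Finset.inf_le hmem) ?_
      rw [hread]
      have hval1 : ν (C (cf i₀ * c ^ (m - i₀)) * Q ^ (n * i₀))
          = ν (C (cf i₀)) + ((m - i₀) • ν (C c) + i₀ • ν (C c)) := by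
        have hQpow : ν (Q ^ (n * i₀)) = i₀ • ν (C c) := by
          rw [pow_mul, ν.map_pow, hvc]
        rw [Polynomial.C_mul, ν.map_mul, ν.map_mul, Polynomial.C_pow, ν.map_pow, hQpow, add_assoc]
      rw [hval1, hνcf, zero_add, ← add_nsmul]
      rw [show m - i₀ + i₀ = m by omega]
    have hwP : ν P = m • ν (C c) + w S := by
      rw [← hw P, hiden, w.map_mul, w.map_pow, hcQdef, hw]
    have hle0 : w S ≤ 0 := by
      apply KeyAux.le_zero_of_add_le (KeyAux.nsmul_ne_top hνc_top m)
      rw [← hwP]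
      exact hP_le
    exact le_antisymm hle0 hge
end
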